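/- arXiv:1511.07396 — 6 statements merged into one kernel-verified Lean document; each statement's English description precedes it below -/
import Mathlib

section
/- Let τ̄ = max(τ₁, τ₂) and assume τ̄ ≥ 0. For every β ∈ (0,1], γ > 0 and every pair of points y, y' ∈ F_{β,γ}(D_{β,γ}) such that the segment joining y and y' is entirely contained in F_{β,γ}(D_{β,γ}), one has (ψ_{β,γ}(y) − ψ_{β,γ}(y'))·(y − y') ≤ τ̄ ‖y − y'‖₂²; in other words, ψ_{β,γ} is τ̄ non-expansive on each convex component of the open cone F_{β,γ}(D_{β,γ}). -/
set_option maxHeartbeats 2000000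


open Real Set

/-- The competitive Lotka–Volterra push-forward vector field
`ψ_{β,γ} = (J_{F_{β,γ}} b) ∘ F_{β,γ}⁻¹` on `(0,∞)²`. -/
noncomputable def psiLV (τ₁ τ₂ a b c d β γ : ℝ) (y : ℝ × ℝ) : ℝ × ℝ :=
  (β * y.1 * (τ₁ - a * y.1 ^ (1 / β) - c * γ ^ (-(1 / β)) * y.2 ^ (1 / β)),
   β * y.2 * (τ₂ - b * γ ^ (-(1 / β)) * y.2 ^ (1 / β) - d * y.1 ^ (1 / β)))

/-- The transformation `F_{β,γ}(x₁,x₂) = (x₁^β, γ x₂^β)`. -/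
noncomputable def FLV (β γ : ℝ) (x : ℝ × ℝ) : ℝ × ℝ := (x.1 ^ β, γ * x.2 ^ β)

/-- The open cone `D_{β,γ}`. -/
noncomputable def DLV (a b c d β γ : ℝ) : Set (ℝ × ℝ) :=
  {x | 0 < x.1 ∧ 0 < x.2 ∧
    0 < 4 * β * (1 + β) * (a * d * x.1 ^ 2 + b * c * x.2 ^ 2)
        + (4 * a * b * (1 + β) ^ 2 + 4 * (β ^ 2 - 1) * c * d) * (x.1 * x.2)
        - (c * γ⁻¹ * x.1 ^ β * x.2 ^ (1 - β) - d * γ * x.1 ^ (1 - β) * x.2 ^ β) ^ 2}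

/-- Euclidean scalar product on `ℝ²`. -/
def dot2 (u v : ℝ × ℝ) : ℝ := u.1 * v.1 + u.2 * v.2

/-- Euclidean norm on `ℝ²`. -/
noncomputable def nrm2 (u : ℝ × ℝ) : ℝ := Real.sqrt (u.1 ^ 2 + u.2 ^ 2)

noncomputable def QLV (τ₁ τ₂ a b c d β γ : ℝ) (z v : ℝ × ℝ) : ℝ :=
  (β * τ₁ - a * (1 + β) * z.1 ^ (1 / β) - c * β * γ ^ (-(1 / β)) * z.2 ^ (1 / β)) * v.1 ^ 2
  + (β * τ₂ - b * (1 + β) * γ ^ (-(1 / β)) * z.2 ^ (1 / β) - d * β * z.1 ^ (1 / β)) * v.2 ^ 2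
  - (c * γ ^ (-(1 / β)) * z.1 * z.2 ^ (1 / β - 1) + d * z.2 * z.1 ^ (1 / β - 1)) * (v.1 * v.2)

lemma QLV_le (τ₁ τ₂ a b c d : ℝ) (ha : 0 ≤ a) (hb : 0 ≤ b) (hc : 0 ≤ c) (hd : 0 ≤ d)
    (hτ : 0 ≤ max τ₁ τ₂) (β γ : ℝ) (hβ0 : 0 < β) (hβ1 : β ≤ 1) (hγ : 0 < γ)
    (z : ℝ × ℝ) (hz : z ∈ FLV β γ '' DLV a b c d β γ) (v : ℝ × ℝ) :
    QLV τ₁ τ₂ a b c d β γ z v ≤ max τ₁ τ₂ * (v.1 ^ 2 + v.2 ^ 2) := by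
  obtain ⟨x, ⟨hx1, hx2, hxD⟩, rfl⟩ := hz
  have hexp : β * (1 / β - 1) = 1 - β := by field_simp
  have e1 : ((x.1 : ℝ) ^ β) ^ (1 / β) = x.1 := by
    rw [← Real.rpow_mul hx1.le, mul_one_div, div_self hβ0.ne', Real.rpow_one]
  have g1 : (γ * x.2 ^ β) ^ (1 / β) = γ ^ (1 / β) * x.2 := by
    rw [Real.mul_rpow hγ.le (Real.rpow_nonneg hx2.le β), ← Real.rpow_mul hx2.le,
      mul_one_div, div_self hβ0.ne', Real.rpow_one]
  have g2 : (γ * x.2 ^ β) ^ (1 / β - 1) = γ ^ (1 / β - 1) * x.2 ^ (1 - β) := by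
    rw [Real.mul_rpow hγ.le (Real.rpow_nonneg hx2.le β), ← Real.rpow_mul hx2.le, hexp]
  have e4 : ((x.1 : ℝ) ^ β) ^ (1 / β - 1) = x.1 ^ (1 - β) := by
    rw [← Real.rpow_mul hx1.le, hexp]
  have hγ1 : γ ^ (-(1 / β)) * γ ^ (1 / β) = 1 := by
    rw [← Real.rpow_add hγ]; simp
  have hγ2 : γ ^ (-(1 / β)) * γ ^ (1 / β - 1) = γ⁻¹ := by
    rw [← Real.rpow_add hγ, show -(1/β) + (1/β - 1) = -1 by ring, Real.rpow_neg_one]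
  have m1 : (x.1 : ℝ) ^ β * x.1 ^ (1 - β) = x.1 := by
    rw [← Real.rpow_add hx1, show β + (1 - β) = (1:ℝ) by ring, Real.rpow_one]
  have m2 : (x.2 : ℝ) ^ (1 - β) * x.2 ^ β = x.2 := by
    rw [← Real.rpow_add hx2, show (1 - β) + β = (1:ℝ) by ring, Real.rpow_one]
  have hQeq : QLV τ₁ τ₂ a b c d β γ (FLV β γ x) v =
      β * τ₁ * v.1 ^ 2 + β * τ₂ * v.2 ^ 2
      - ((a * (1 + β) * x.1 + c * β * x.2) * v.1 ^ 2
        + (b * (1 + β) * x.2 + d * β * x.1) * v.2 ^ 2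
        + (c * γ⁻¹ * x.1 ^ β * x.2 ^ (1 - β) + d * γ * x.1 ^ (1 - β) * x.2 ^ β)
          * (v.1 * v.2)) := by
    simp only [QLV, FLV]
    rw [e1, g1, g2, e4]
    linear_combination (-(c * β * x.2 * v.1 ^ 2) - b * (1 + β) * x.2 * v.2 ^ 2) * hγ1
      + (-(c * x.1 ^ β * x.2 ^ (1 - β) * v.1 * v.2)) * hγ2
  rw [hQeq]
  have hcT0' : 0 ≤ c * γ⁻¹ * x.1 ^ β * x.2 ^ (1 - β) :=
    mul_nonneg (mul_nonneg (mul_nonneg hc (inv_nonneg.2 hγ.le))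
      (Real.rpow_nonneg hx1.le β)) (Real.rpow_nonneg hx2.le _)
  have hdT0' : 0 ≤ d * γ * x.1 ^ (1 - β) * x.2 ^ β :=
    mul_nonneg (mul_nonneg (mul_nonneg hd hγ.le)
      (Real.rpow_nonneg hx1.le _)) (Real.rpow_nonneg hx2.le β)
  have hprod' : (c * γ⁻¹ * x.1 ^ β * x.2 ^ (1 - β)) * (d * γ * x.1 ^ (1 - β) * x.2 ^ β)
      = c * d * (x.1 * x.2) := by
    rw [show c * γ⁻¹ * x.1 ^ β * x.2 ^ (1 - β) * (d * γ * x.1 ^ (1 - β) * x.2 ^ β)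
      = c * d * (γ⁻¹ * γ) * ((x.1 ^ β * x.1 ^ (1 - β)) * (x.2 ^ (1 - β) * x.2 ^ β)) from by ring,
      m1, m2, inv_mul_cancel₀ hγ.ne']
    ring
  obtain ⟨cT, hcT⟩ : ∃ t, c * γ⁻¹ * x.1 ^ β * x.2 ^ (1 - β) = t := ⟨_, rfl⟩
  obtain ⟨dT, hdT⟩ : ∃ t, d * γ * x.1 ^ (1 - β) * x.2 ^ β = t := ⟨_, rfl⟩
  simp only [hcT, hdT] at hxD hcT0' hdT0' hprod' ⊢
  have key : 4 * (a * (1 + β) * x.1 + c * β * x.2) * (b * (1 + β) * x.2 + d * β * x.1)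
      - (cT + dT) ^ 2
      = (4 * β * (1 + β) * (a * d * x.1 ^ 2 + b * c * x.2 ^ 2)
        + (4 * a * b * (1 + β) ^ 2 + 4 * (β ^ 2 - 1) * c * d) * (x.1 * x.2) - (cT - dT) ^ 2)
        + 4 * (c * d * (x.1 * x.2)) - 4 * (cT * dT) := by ring
  have h4PQ' : (cT + dT) ^ 2
      < 4 * (a * (1 + β) * x.1 + c * β * x.2) * (b * (1 + β) * x.2 + d * β * x.1) := by
    linarith [hxD, hprod', key]
  have hP0' : 0 ≤ a * (1 + β) * x.1 + c * β * x.2 := by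
    have h1 := mul_nonneg (mul_nonneg ha (by linarith : (0:ℝ) ≤ 1 + β)) hx1.le
    have h2 := mul_nonneg (mul_nonneg hc hβ0.le) hx2.le
    linarith
  have hQ0' : 0 ≤ b * (1 + β) * x.2 + d * β * x.1 := by
    have h1 := mul_nonneg (mul_nonneg hb (by linarith : (0:ℝ) ≤ 1 + β)) hx2.le
    have h2 := mul_nonneg (mul_nonneg hd hβ0.le) hx1.le
    linarith
  obtain ⟨P, hPd⟩ : ∃ t, a * (1 + β) * x.1 + c * β * x.2 = t := ⟨_, rfl⟩
  obtain ⟨Q, hQd⟩ : ∃ t, b * (1 + β) * x.2 + d * β * x.1 = t := ⟨_, rfl⟩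
  simp only [hPd, hQd] at h4PQ' hP0' hQ0' ⊢
  clear hQeq e1 g1 g2 e4 hγ1 hγ2 m1 m2 hexp hprod' key hcT hdT hPd hQd hxD
  have hPQpos : 0 < P * Q := by nlinarith [sq_nonneg (cT + dT), h4PQ']
  have hP : 0 < P := by
    rcases hP0'.lt_or_eq with h | h
    · exact h
    · exfalso; rw [← h] at hPQpos; simp at hPQpos
  have hquad : 0 ≤ P * v.1 ^ 2 + Q * v.2 ^ 2 + (cT + dT) * (v.1 * v.2) := by
    nlinarith [sq_nonneg (2 * P * v.1 + (cT + dT) * v.2),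
      mul_nonneg (sub_nonneg.2 h4PQ'.le) (sq_nonneg v.2), hP]
  have hT1 : β * τ₁ ≤ max τ₁ τ₂ := by
    nlinarith [mul_nonneg hβ0.le (sub_nonneg.2 (le_max_left τ₁ τ₂)),
      mul_nonneg (sub_nonneg.2 hβ1) hτ]
  have hT2 : β * τ₂ ≤ max τ₁ τ₂ := by
    nlinarith [mul_nonneg hβ0.le (sub_nonneg.2 (le_max_right τ₁ τ₂)),
      mul_nonneg (sub_nonneg.2 hβ1) hτ]
  nlinarith [hquad, mul_le_mul_of_nonneg_right hT1 (sq_nonneg v.1),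
    mul_le_mul_of_nonneg_right hT2 (sq_nonneg v.2)]

lemma hasDerivAt_dotLV (τ₁ τ₂ a b c d β γ : ℝ) (hβ : 0 < β) (w v : ℝ × ℝ) (t : ℝ)
    (h1 : 0 < w.1 + t * v.1) (h2 : 0 < w.2 + t * v.2) :
    HasDerivAt
      (fun t => dot2 (psiLV τ₁ τ₂ a b c d β γ (w.1 + t * v.1, w.2 + t * v.2)) v)
      (QLV τ₁ τ₂ a b c d β γ (w.1 + t * v.1, w.2 + t * v.2) v) t := by
  have hu : HasDerivAt (fun t : ℝ => w.1 + t * v.1) v.1 t := by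
    simpa using ((hasDerivAt_id t).mul_const v.1).const_add w.1
  have hx : HasDerivAt (fun t : ℝ => w.2 + t * v.2) v.2 t := by
    simpa using ((hasDerivAt_id t).mul_const v.2).const_add w.2
  have hus : HasDerivAt (fun s : ℝ => (w.1 + s * v.1) ^ (1 / β))
      (v.1 * (1 / β) * (w.1 + t * v.1) ^ (1 / β - 1)) t := hu.rpow_const (Or.inl h1.ne')
  have hxs : HasDerivAt (fun s : ℝ => (w.2 + s * v.2) ^ (1 / β))
      (v.2 * (1 / β) * (w.2 + t * v.2) ^ (1 / β - 1)) t := hx.rpow_const (Or.inl h2.ne')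
  have hA : HasDerivAt (fun s : ℝ => τ₁ - a * (w.1 + s * v.1) ^ (1 / β)
      - c * γ ^ (-(1 / β)) * (w.2 + s * v.2) ^ (1 / β))
      (-(a * (v.1 * (1 / β) * (w.1 + t * v.1) ^ (1 / β - 1)))
        - c * γ ^ (-(1 / β)) * (v.2 * (1 / β) * (w.2 + t * v.2) ^ (1 / β - 1))) t :=
    ((hus.const_mul a).const_sub τ₁).sub (hxs.const_mul (c * γ ^ (-(1 / β))))
  have hB : HasDerivAt (fun s : ℝ => τ₂ - b * γ ^ (-(1 / β)) * (w.2 + s * v.2) ^ (1 / β)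
      - d * (w.1 + s * v.1) ^ (1 / β))
      (-(b * γ ^ (-(1 / β)) * (v.2 * (1 / β) * (w.2 + t * v.2) ^ (1 / β - 1)))
        - d * (v.1 * (1 / β) * (w.1 + t * v.1) ^ (1 / β - 1))) t :=
    ((hxs.const_mul (b * γ ^ (-(1 / β)))).const_sub τ₂).sub (hus.const_mul d)
  have H := (((hu.const_mul β).mul hA).mul_const v.1).add
    (((hx.const_mul β).mul hB).mul_const v.2)
  have hfun : (fun t => dot2 (psiLV τ₁ τ₂ a b c d β γ (w.1 + t * v.1, w.2 + t * v.2)) v)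
      = fun s : ℝ => (β * (w.1 + s * v.1) * (τ₁ - a * (w.1 + s * v.1) ^ (1 / β)
          - c * γ ^ (-(1 / β)) * (w.2 + s * v.2) ^ (1 / β))) * v.1
        + (β * (w.2 + s * v.2) * (τ₂ - b * γ ^ (-(1 / β)) * (w.2 + s * v.2) ^ (1 / β)
          - d * (w.1 + s * v.1) ^ (1 / β))) * v.2 := by
    funext s; simp [dot2, psiLV]
  rw [hfun]
  refine H.congr_deriv (Eq.symm ?_)
  have e1 : β * (1 / β) = 1 := by field_simp
  have e2 : (w.1 + t * v.1) * (w.1 + t * v.1) ^ (1 / β - 1) = (w.1 + t * v.1) ^ (1 / β) := by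
    rw [mul_comm, ← Real.rpow_add_one h1.ne', sub_add_cancel]
  have e3 : (w.2 + t * v.2) * (w.2 + t * v.2) ^ (1 / β - 1) = (w.2 + t * v.2) ^ (1 / β) := by
    rw [mul_comm, ← Real.rpow_add_one h2.ne', sub_add_cancel]
  simp only [QLV]
  linear_combination (a * v.1 ^ 2 * (w.1 + t * v.1) * (w.1 + t * v.1) ^ (1 / β - 1)
      + c * γ ^ (-(1 / β)) * (w.1 + t * v.1) * (w.2 + t * v.2) ^ (1 / β - 1) * v.1 * v.2
      + b * γ ^ (-(1 / β)) * (w.2 + t * v.2) * (w.2 + t * v.2) ^ (1 / β - 1) * v.2 ^ 2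
      + d * (w.2 + t * v.2) * (w.1 + t * v.1) ^ (1 / β - 1) * v.1 * v.2) * e1
    + (a * v.1 ^ 2) * e2 + (b * γ ^ (-(1 / β)) * v.2 ^ 2) * e3


/-- `ψ_{β,γ}` is `max(τ₁,τ₂)` non-expansive on each convex component of the open cone
`F_{β,γ}(D_{β,γ})`. -/
theorem stmt0 (τ₁ τ₂ a b c d : ℝ) (ha : 0 ≤ a) (hb : 0 ≤ b) (hc : 0 ≤ c) (hd : 0 ≤ d)
    (hτ : 0 ≤ max τ₁ τ₂) (β γ : ℝ) (hβ : β ∈ Set.Ioc (0 : ℝ) 1) (hγ : 0 < γ)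
    (y y' : ℝ × ℝ)
    (hy : y ∈ FLV β γ '' DLV a b c d β γ) (hy' : y' ∈ FLV β γ '' DLV a b c d β γ)
    (hseg : segment ℝ y y' ⊆ FLV β γ '' DLV a b c d β γ) :
    dot2 (psiLV τ₁ τ₂ a b c d β γ y - psiLV τ₁ τ₂ a b c d β γ y') (y - y') ≤
      max τ₁ τ₂ * nrm2 (y - y') ^ 2 := by
  obtain ⟨hβ0, hβ1⟩ := hβ
  set v : ℝ × ℝ := y - y' with hv
  -- every point of the line segment (in parameter form) lies in the image set
  have hmem : ∀ t ∈ Icc (0:ℝ) 1,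
      ((y'.1 + t * v.1, y'.2 + t * v.2) : ℝ × ℝ) ∈ FLV β γ '' DLV a b c d β γ := by
    intro t ht
    apply hseg
    refine ⟨t, 1 - t, ht.1, by linarith [ht.2], by ring, ?_⟩
    have hv1 : v.1 = y.1 - y'.1 := rfl
    have hv2 : v.2 = y.2 - y'.2 := rfl
    rw [Prod.ext_iff]
    constructor
    · show t * y.1 + (1 - t) * y'.1 = y'.1 + t * v.1
      rw [hv1]; ring
    · show t * y.2 + (1 - t) * y'.2 = y'.2 + t * v.2
      rw [hv2]; ring
  have hpos : ∀ z ∈ FLV β γ '' DLV a b c d β γ, 0 < z.1 ∧ 0 < z.2 := by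
    rintro z ⟨x, ⟨hx1, hx2, -⟩, rfl⟩
    exact ⟨Real.rpow_pos_of_pos hx1 β, mul_pos hγ (Real.rpow_pos_of_pos hx2 β)⟩
  set f : ℝ → ℝ := fun t =>
    dot2 (psiLV τ₁ τ₂ a b c d β γ (y'.1 + t * v.1, y'.2 + t * v.2)) v with hf
  set g : ℝ → ℝ := fun t =>
    QLV τ₁ τ₂ a b c d β γ (y'.1 + t * v.1, y'.2 + t * v.2) v with hg
  have hderiv : ∀ t ∈ Icc (0:ℝ) 1, HasDerivAt f (g t) t := by
    intro t ht
    have h := hpos _ (hmem t ht)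
    exact hasDerivAt_dotLV τ₁ τ₂ a b c d β γ hβ0 y' v t h.1 h.2
  have hcont : ContinuousOn f (Icc 0 1) :=
    fun t ht => (hderiv t ht).continuousAt.continuousWithinAt
  obtain ⟨ct, hct, hcteq⟩ := exists_hasDerivAt_eq_slope f g one_pos hcont
    (fun t ht => hderiv t (Ioo_subset_Icc_self ht))
  have hgle : g ct ≤ max τ₁ τ₂ * (v.1 ^ 2 + v.2 ^ 2) :=
    QLV_le τ₁ τ₂ a b c d ha hb hc hd hτ β γ hβ0 hβ1 hγ _
      (hmem ct (Ioo_subset_Icc_self hct)) v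
  have hpt1 : ((y'.1 + 1 * v.1, y'.2 + 1 * v.2) : ℝ × ℝ) = y := by
    rw [Prod.ext_iff]
    constructor
    · show y'.1 + 1 * (y.1 - y'.1) = y.1; ring
    · show y'.2 + 1 * (y.2 - y'.2) = y.2; ring
  have hpt0 : ((y'.1 + 0 * v.1, y'.2 + 0 * v.2) : ℝ × ℝ) = y' := by
    rw [Prod.ext_iff]
    constructor
    · show y'.1 + 0 * (y.1 - y'.1) = y'.1; ring
    · show y'.2 + 0 * (y.2 - y'.2) = y'.2; ring
  have hf1 : f 1 = dot2 (psiLV τ₁ τ₂ a b c d β γ y) v := by rw [hf]; simp only; rw [hpt1]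
  have hf0 : f 0 = dot2 (psiLV τ₁ τ₂ a b c d β γ y') v := by rw [hf]; simp only; rw [hpt0]
  have hdot : dot2 (psiLV τ₁ τ₂ a b c d β γ y - psiLV τ₁ τ₂ a b c d β γ y') v
      = f 1 - f 0 := by
    rw [hf1, hf0]
    simp only [dot2, Prod.fst_sub, Prod.snd_sub]
    ring
  have hnrm : nrm2 v ^ 2 = v.1 ^ 2 + v.2 ^ 2 := by
    rw [nrm2, Real.sq_sqrt (by positivity)]
  rw [hdot, hnrm]
  have : f 1 - f 0 = g ct := by
    rw [hcteq]; norm_num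
  rw [this]
  exact hgle
end

section
/- Assume a, b, c, d > 0, let γ > 0 and β ∈ (0,1) with β ≠ 1/2 such that q_β = 4ab(1+β)² + 4(β²−1)cd > 0. Then there exists η > 0 such that 𝒞_{η,β,γ} ⊆ D_{β,γ}. -/
open Real Set

/-- The cone `𝒞_{η,β,γ}`, where `x_{β,γ} = (dγ²/c)^{1/(2β−1)}`. -/
noncomputable def CLV (c d β γ η : ℝ) : Set (ℝ × ℝ) :=
  {x | 0 < x.1 ∧ 0 < x.2 ∧
    x.1 / x.2 ∈
      Set.Ioo (0 : ℝ) η ∪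
      Set.Ioo ((d * γ ^ 2 / c) ^ (1 / (2 * β - 1)) - η)
        ((d * γ ^ 2 / c) ^ (1 / (2 * β - 1)) + η) ∪
      Set.Ioi (1 / η)}

section LVaux
open Filter Topology

/-- The one-variable function controlling membership in `DLV`. -/
noncomputable def Flv (a b c d β γ r : ℝ) : ℝ :=
  4 * β * (1 + β) * (a * d * r ^ 2 + b * c)
    + (4 * a * b * (1 + β) ^ 2 + 4 * (β ^ 2 - 1) * c * d) * r
    - (c * γ⁻¹ * r ^ β - d * γ * r ^ (1 - β)) ^ 2

/-- `Flv` rescaled for behaviour at infinity. -/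
noncomputable def Glv (a b c d β γ r : ℝ) : ℝ :=
  4 * β * (1 + β) * (a * d + b * c * r ^ (-2 : ℝ))
    + (4 * a * b * (1 + β) ^ 2 + 4 * (β ^ 2 - 1) * c * d) * r ^ (-1 : ℝ)
    - (c * γ⁻¹ * r ^ (β - 1) - d * γ * r ^ (-β)) ^ 2

lemma LVkey (a b c d β γ x1 x2 : ℝ) (h1 : 0 < x1) (h2 : 0 < x2) :
    4 * β * (1 + β) * (a * d * x1 ^ 2 + b * c * x2 ^ 2)
        + (4 * a * b * (1 + β) ^ 2 + 4 * (β ^ 2 - 1) * c * d) * (x1 * x2)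
        - (c * γ⁻¹ * x1 ^ β * x2 ^ (1 - β) - d * γ * x1 ^ (1 - β) * x2 ^ β) ^ 2
    = x2 ^ 2 * Flv a b c d β γ (x1 / x2) := by
  have h2' : x2 ≠ 0 := h2.ne'
  have hb2 : (0:ℝ) < x2 ^ β := Real.rpow_pos_of_pos h2 β
  have hb2' : (0:ℝ) < x2 ^ (1-β) := Real.rpow_pos_of_pos h2 (1-β)
  have eA : x1 ^ β * x2 ^ (1 - β) = x2 * (x1 / x2) ^ β := by
    rw [Real.div_rpow h1.le h2.le, Real.rpow_sub h2, Real.rpow_one]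
    field_simp
  have eB : x1 ^ (1-β) * x2 ^ β = x2 * (x1 / x2) ^ (1-β) := by
    rw [Real.div_rpow h1.le h2.le, Real.rpow_sub h2, Real.rpow_one]
    field_simp
  have ekey : c * γ⁻¹ * x1 ^ β * x2 ^ (1 - β) - d * γ * x1 ^ (1 - β) * x2 ^ β
      = x2 * (c * γ⁻¹ * (x1/x2) ^ β - d * γ * (x1/x2) ^ (1-β)) := by
    linear_combination (c * γ⁻¹) * eA - (d * γ) * eB
  rw [ekey, Flv]
  field_simp

lemma LVFcont (a b c d β γ r : ℝ) (h : r ≠ 0 ∨ (0 < β ∧ β < 1)) :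
    ContinuousAt (Flv a b c d β γ) r := by
  have hβ : ContinuousAt (fun x : ℝ => x ^ β) r :=
    Real.continuousAt_rpow_const r β (h.imp id fun h => h.1.le)
  have hβ' : ContinuousAt (fun x : ℝ => x ^ (1 - β)) r :=
    Real.continuousAt_rpow_const r (1 - β) (h.imp id fun h => by linarith [h.2])
  have h1 : ContinuousAt (fun r : ℝ => 4 * β * (1 + β) * (a * d * r ^ 2 + b * c)
      + (4 * a * b * (1 + β) ^ 2 + 4 * (β ^ 2 - 1) * c * d) * r) r := by fun_prop
  exact h1.sub (((continuousAt_const.mul hβ).sub (continuousAt_const.mul hβ')).pow 2)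

lemma LVFzero (a b c d β γ : ℝ) (hβ : 0 < β) (hβ1 : β < 1) :
    Flv a b c d β γ 0 = 4 * β * (1 + β) * (b * c) := by
  rw [Flv, Real.zero_rpow hβ.ne', Real.zero_rpow (by linarith : (1:ℝ)-β ≠ 0)]
  ring

lemma LVFstar (a b c d β γ : ℝ) (hc : 0 < c) (hd : 0 < d) (hγ : 0 < γ)
    (hβ' : 2 * β - 1 ≠ 0) :
    Flv a b c d β γ ((d * γ ^ 2 / c) ^ (1 / (2 * β - 1)))
      = 4 * β * (1 + β) * (a * d * ((d * γ ^ 2 / c) ^ (1 / (2 * β - 1))) ^ 2 + b * c)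
        + (4 * a * b * (1 + β) ^ 2 + 4 * (β ^ 2 - 1) * c * d)
          * ((d * γ ^ 2 / c) ^ (1 / (2 * β - 1))) := by
  set t : ℝ := (d * γ ^ 2 / c) ^ (1 / (2 * β - 1)) with ht
  have hbase : (0:ℝ) < d * γ ^ 2 / c := by positivity
  have htpos : 0 < t := Real.rpow_pos_of_pos hbase _
  have h2 : t ^ (2 * β - 1) = d * γ ^ 2 / c := by
    rw [ht, ← Real.rpow_mul hbase.le, one_div_mul_cancel hβ', Real.rpow_one]
  have h5 : t ^ β = t ^ (1 - β) * (d * γ ^ 2 / c) := by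
    nth_rewrite 1 [show β = (1 - β) + (2 * β - 1) by ring]
    rw [Real.rpow_add htpos, h2]
  have h6 : c * γ⁻¹ * t ^ β - d * γ * t ^ (1 - β) = 0 := by
    rw [h5]; field_simp; ring
  rw [Flv, h6]
  ring

lemma LVFG (a b c d β γ r : ℝ) (hr : 0 < r) :
    Flv a b c d β γ r = r ^ 2 * Glv a b c d β γ r := by
  have e1 : r ^ (2:ℕ) * r ^ (-2:ℝ) = 1 := by
    rw [← Real.rpow_natCast r 2, ← Real.rpow_add hr]; norm_num
  have e2 : r ^ (2:ℕ) * r ^ (-1:ℝ) = r := by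
    rw [← Real.rpow_natCast r 2, ← Real.rpow_add hr]; norm_num
  have e3 : r * r ^ (β - 1) = r ^ β := by
    nth_rewrite 1 [← Real.rpow_one r]
    rw [← Real.rpow_add hr]; congr 1 <;> ring
  have e4 : r * r ^ (-β) = r ^ (1 - β) := by
    nth_rewrite 1 [← Real.rpow_one r]
    rw [← Real.rpow_add hr]; congr 1 <;> ring
  rw [Flv, Glv]
  linear_combination (-(4*β*(1+β)*b*c)) * e1
    + (-(4 * a * b * (1 + β) ^ 2 + 4 * (β ^ 2 - 1) * c * d)) * e2
    + ((c * γ⁻¹ * r ^ β - d * γ * r ^ (1 - β)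
        + r * (c * γ⁻¹ * r ^ (β - 1)) - r * (d * γ * r ^ (-β))) * (c * γ⁻¹)) * e3
    + (-(c * γ⁻¹ * r ^ β - d * γ * r ^ (1 - β)
        + r * (c * γ⁻¹ * r ^ (β - 1)) - r * (d * γ * r ^ (-β))) * (d * γ)) * e4

lemma LVGtendsto (a b c d β γ : ℝ) (hβ : 0 < β) (hβ1 : β < 1) :
    Tendsto (Glv a b c d β γ) atTop (nhds (4 * β * (1 + β) * (a * d))) := by
  have t2 : Tendsto (fun r : ℝ => r ^ (-2 : ℝ)) atTop (nhds 0) :=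
    tendsto_rpow_neg_atTop (by norm_num : (0:ℝ) < 2)
  have t1 : Tendsto (fun r : ℝ => r ^ (-1 : ℝ)) atTop (nhds 0) :=
    tendsto_rpow_neg_atTop (by norm_num : (0:ℝ) < 1)
  have t3 : Tendsto (fun r : ℝ => r ^ (β - 1)) atTop (nhds 0) := by
    rw [show β - 1 = -(1 - β) by ring]
    exact tendsto_rpow_neg_atTop (by linarith : (0:ℝ) < 1 - β)
  have t4 : Tendsto (fun r : ℝ => r ^ (-β)) atTop (nhds 0) :=
    tendsto_rpow_neg_atTop hβ
  have T := ((((t2.const_mul (b*c)).const_add (a*d)).const_mul (4*β*(1+β))).add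
      (t1.const_mul (4 * a * b * (1 + β) ^ 2 + 4 * (β ^ 2 - 1) * c * d))).sub
    (((t3.const_mul (c * γ⁻¹)).sub (t4.const_mul (d * γ))).pow 2)
  have T2 : Tendsto (Glv a b c d β γ) atTop
      (nhds (4 * β * (1 + β) * (a * d + b * c * 0)
        + (4 * a * b * (1 + β) ^ 2 + 4 * (β ^ 2 - 1) * c * d) * 0
        - (c * γ⁻¹ * 0 - d * γ * 0) ^ 2)) := T
  rw [show (4 * β * (1 + β) * (a * d + b * c * 0)
        + (4 * a * b * (1 + β) ^ 2 + 4 * (β ^ 2 - 1) * c * d) * 0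
        - (c * γ⁻¹ * 0 - d * γ * 0) ^ 2) = 4 * β * (1 + β) * (a * d) by ring] at T2
  exact T2

end LVaux

open Filter Topology in
/-- There exists `η > 0` with `𝒞_{η,β,γ} ⊆ D_{β,γ}`. -/
theorem stmt1 (a b c d : ℝ) (ha : 0 < a) (hb : 0 < b) (hc : 0 < c) (hd : 0 < d)
    (γ : ℝ) (hγ : 0 < γ) (β : ℝ) (hβ : β ∈ Set.Ioo (0 : ℝ) 1) (hβ' : β ≠ 1 / 2)
    (hq : 0 < 4 * a * b * (1 + β) ^ 2 + 4 * (β ^ 2 - 1) * c * d) :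
    ∃ η > 0, CLV c d β γ η ⊆ DLV a b c d β γ := by
  obtain ⟨hβ0, hβ1⟩ := hβ
  have h2β : 2 * β - 1 ≠ 0 := by
    intro h; apply hβ'; linarith
  set xs : ℝ := (d * γ ^ 2 / c) ^ (1 / (2 * β - 1))
  have hxseq : xs = (d * γ ^ 2 / c) ^ (1 / (2 * β - 1)) := rfl
  have hxspos : 0 < xs := Real.rpow_pos_of_pos (by positivity) _
  -- near 0
  have hF0pos : 0 < Flv a b c d β γ 0 := by
    rw [LVFzero a b c d β γ hβ0 hβ1]; positivity
  have hev0 : ∀ᶠ r in nhds (0:ℝ), 0 < Flv a b c d β γ r :=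
    (LVFcont a b c d β γ 0 (Or.inr ⟨hβ0, hβ1⟩)).eventually (eventually_gt_nhds hF0pos)
  obtain ⟨ε0, hε0, h0⟩ := Metric.eventually_nhds_iff.1 hev0
  -- near xs
  have hFspos : 0 < Flv a b c d β γ xs := by
    rw [hxseq, LVFstar a b c d β γ hc hd hγ h2β]
    have h1 : 0 < 4 * β * (1 + β)
        * (a * d * ((d * γ ^ 2 / c) ^ (1 / (2 * β - 1))) ^ 2 + b * c) := by positivity
    have h2 : 0 < (4 * a * b * (1 + β) ^ 2 + 4 * (β ^ 2 - 1) * c * d)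
        * ((d * γ ^ 2 / c) ^ (1 / (2 * β - 1))) := mul_pos hq (by rw [← hxseq]; exact hxspos)
    linarith
  have hevs : ∀ᶠ r in nhds xs, 0 < Flv a b c d β γ r :=
    (LVFcont a b c d β γ xs (Or.inl hxspos.ne')).eventually (eventually_gt_nhds hFspos)
  obtain ⟨εs, hεs, hs⟩ := Metric.eventually_nhds_iff.1 hevs
  -- near ∞
  have hGev : ∀ᶠ r in atTop, 0 < Glv a b c d β γ r :=
    (LVGtendsto a b c d β γ hβ0 hβ1).eventually (eventually_gt_nhds (by positivity))
  obtain ⟨R, hR⟩ := eventually_atTop.1 hGev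
  set M : ℝ := max R 1
  have hMpos : (0:ℝ) < M := lt_of_lt_of_le one_pos (le_max_right R 1)
  refine ⟨min ε0 (min εs (1 / M)), by positivity, ?_⟩
  set η : ℝ := min ε0 (min εs (1 / M))
  have hηpos : 0 < η := by positivity
  rintro ⟨x1, x2⟩ ⟨hx1, hx2, hmem⟩
  have hrpos : 0 < x1 / x2 := div_pos hx1 hx2
  refine ⟨hx1, hx2, ?_⟩
  show 0 < 4 * β * (1 + β) * (a * d * x1 ^ 2 + b * c * x2 ^ 2)
        + (4 * a * b * (1 + β) ^ 2 + 4 * (β ^ 2 - 1) * c * d) * (x1 * x2)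
        - (c * γ⁻¹ * x1 ^ β * x2 ^ (1 - β) - d * γ * x1 ^ (1 - β) * x2 ^ β) ^ 2
  rw [LVkey a b c d β γ x1 x2 hx1 hx2]
  apply mul_pos (pow_pos hx2 2)
  rcases hmem with (h | h) | h
  · -- small ratio
    apply h0
    rw [Real.dist_eq, sub_zero, abs_of_pos hrpos]
    exact lt_of_lt_of_le h.2 (min_le_left _ _)
  · -- near xs
    apply hs
    rw [Real.dist_eq, abs_lt]
    have hle : η ≤ εs := le_trans (min_le_right _ _) (min_le_left _ _)
    obtain ⟨h1, h2⟩ := h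
    constructor <;> linarith [hxseq]
  · -- large ratio
    have hη1M : η ≤ 1 / M := le_trans (min_le_right _ _) (min_le_right _ _)
    have hM1η : M ≤ 1 / η := by
      rw [le_div_iff₀ hηpos]
      calc M * η ≤ M * (1 / M) := mul_le_mul_of_nonneg_left hη1M hMpos.le
        _ = 1 := mul_one_div_cancel hMpos.ne'
    have hrM : M < x1 / x2 := lt_of_le_of_lt hM1η h
    have hrR : R ≤ x1 / x2 := le_trans (le_max_left R 1) hrM.le
    rw [LVFG a b c d β γ _ hrpos]
    exact mul_pos (pow_pos hrpos 2) (hR _ hrR)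
end

section
/- Assume a, b, c, d > 0, let γ > 0 and β ∈ (0,1) with β ≠ 1/2 such that q_β = 4ab(1+β)² + 4(β²−1)cd > 0. Then there exist η > 0, A > 0 and μ > 0 such that for all y, y' lying in the same connected component of the open cone F_{β,γ}(𝒞_{η,β,γ}) (these components are convex) and satisfying ‖y‖₂ ≥ A and ‖y'‖₂ ≥ A, one has (ψ_{β,γ}(y) − ψ_{β,γ}(y'))·(y − y') ≤ −μ · min(‖y‖₂, ‖y'‖₂) · ‖y − y'‖₂². -/
set_option maxHeartbeats 1000000

open Real Set

/- ### Auxiliary lemmas -/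

lemma quad_ineq (P₁ P₂ e x y : ℝ) (hP₁ : 0 ≤ P₁) (hP₂ : 0 ≤ P₂) (h : e^2 ≤ 4*(P₁*P₂)) :
    e*(x*y) ≤ P₁*x^2 + P₂*y^2 := by
  rcases eq_or_lt_of_le hP₁ with h0 | h0
  · have he : e = 0 := by nlinarith [sq_nonneg e]
    subst he; nlinarith [sq_nonneg y]
  · nlinarith [sq_nonneg (2*P₁*x - e*y),
      mul_nonneg (by linarith : (0:ℝ) ≤ 4*(P₁*P₂) - e^2) (sq_nonneg y), h0]

lemma master_core {C₁ A₂ : ℝ} (α₁ α₂ e T₁ T₂ K₁ K₂ m ε z₂ X Δ₁ Δ₂ : ℝ)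
    (hXpos : 0 < X) (hεpos : 0 < ε)
    (hgap : (e/2)^2 + m ≤ α₁*α₂)
    (hα₁K : α₁ ≤ K₁) (hα₂K : α₂ ≤ K₂)
    (hα₁lb : C₁ ≤ α₁) (hα₂lb : A₂ ≤ α₂)
    (hεz₂X : ε*z₂ ≤ ε*X) (hT₁ : |T₁| ≤ ε/2*X) (hT₂ : |T₂| ≤ ε/2*X)
    (hεC : ε ≤ C₁) (hεA : ε ≤ A₂) (hεm : ε*(K₁+K₂) ≤ m) :
    (T₁ - α₁*X)*Δ₁^2 + (T₂ - α₂*X)*Δ₂^2 - (e*X)*(Δ₁*Δ₂) ≤ -(ε/2*z₂)*(Δ₁^2+Δ₂^2) := by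
  have hT₁' : T₁ ≤ |T₁| := le_abs_self T₁
  have hT₂' : T₂ ≤ |T₂| := le_abs_self T₂
  have hα₁ε : ε ≤ α₁ := le_trans hεC hα₁lb
  have hα₂ε : ε ≤ α₂ := le_trans hεA hα₂lb
  obtain ⟨P₁, hP₁⟩ : ∃ P : ℝ, P = α₁*X - T₁ - (ε/2)*z₂ := ⟨_, rfl⟩
  obtain ⟨P₂, hP₂⟩ : ∃ P : ℝ, P = α₂*X - T₂ - (ε/2)*z₂ := ⟨_, rfl⟩
  have hb₁ : α₁*X - ε*X ≤ P₁ := by rw [hP₁]; linarith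
  have hb₂ : α₂*X - ε*X ≤ P₂ := by rw [hP₂]; linarith
  have hc₁ : 0 ≤ α₁*X - ε*X := by nlinarith
  have hc₂ : 0 ≤ α₂*X - ε*X := by nlinarith
  have hP₁0 : 0 ≤ P₁ := le_trans hc₁ hb₁
  have hP₂0 : 0 ≤ P₂ := le_trans hc₂ hb₂
  have h1 : (α₁*X - ε*X)*(α₂*X - ε*X) ≤ P₁*P₂ := mul_le_mul hb₁ hb₂ hc₂ hP₁0
  have h2 : α₁*α₂*X^2 - ε*(K₁+K₂)*X^2 ≤ (α₁*X - ε*X)*(α₂*X - ε*X) := by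
    nlinarith [mul_nonneg (mul_nonneg hεpos.le (sub_nonneg.2 hα₁K)) (sq_nonneg X),
      mul_nonneg (mul_nonneg hεpos.le (sub_nonneg.2 hα₂K)) (sq_nonneg X),
      mul_nonneg (mul_nonneg hεpos.le hεpos.le) (sq_nonneg X)]
  have hP₁P₂ : (α₁*α₂ - m)*X^2 ≤ P₁*P₂ := by
    nlinarith [mul_nonneg (sub_nonneg.2 hεm) (sq_nonneg X)]
  have he2 : e^2 ≤ 4*(α₁*α₂ - m) := by nlinarith
  have hdisc : (-(e*X))^2 ≤ 4*(P₁*P₂) := by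
    nlinarith [mul_le_mul_of_nonneg_right he2 (sq_nonneg X)]
  have key := quad_ineq P₁ P₂ (-(e*X)) Δ₁ Δ₂ hP₁0 hP₂0 hdisc
  rw [hP₁, hP₂] at key
  linarith [key]

lemma master (p : ℝ) (hp : 1 < p) (A₁ C₁ A₂ C₂ E₁ E₂ T₁ T₂ : ℝ)
    (hA₁ : 0 ≤ A₁) (hC₁ : 0 < C₁) (hA₂ : 0 < A₂) (hC₂ : 0 ≤ C₂)
    (u v : ℝ) (hu : 0 ≤ u) (huv : u ≤ v)
    (hF : ∀ r ∈ Icc u v, ((E₁*r + E₂*r^(p-1))/2)^2 < (A₁*r^p + C₁)*(A₂ + C₂*r^p)) :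
    ∃ μ > 0, ∃ A : ℝ, 1 ≤ A ∧ ∀ z₁ z₂ Δ₁ Δ₂ : ℝ, 0 < z₁ → 0 < z₂ →
      u*z₂ ≤ z₁ → z₁ ≤ v*z₂ → A ≤ z₂ →
      (T₁ - A₁*z₁^p - C₁*z₂^p)*Δ₁^2 + (T₂ - A₂*z₂^p - C₂*z₁^p)*Δ₂^2
        - (E₁*z₁*z₂^(p-1) + E₂*z₂*z₁^(p-1))*(Δ₁*Δ₂) ≤ -(μ*z₂)*(Δ₁^2+Δ₂^2) := by
  set G : ℝ → ℝ := fun r => (A₁*r^p + C₁)*(A₂ + C₂*r^p) - ((E₁*r + E₂*r^(p-1))/2)^2 with hG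
  have hGc : ContinuousOn G (Icc u v) := by
    have h1 : ContinuousOn (fun r : ℝ => r^p) (Icc u v) :=
      fun x hx => (Real.continuousAt_rpow_const x p (Or.inr (by linarith))).continuousWithinAt
    have h2 : ContinuousOn (fun r : ℝ => r^(p-1)) (Icc u v) :=
      fun x hx => (Real.continuousAt_rpow_const x (p-1) (Or.inr (by linarith))).continuousWithinAt
    fun_prop
  obtain ⟨r₀, hr₀, hmin⟩ := isCompact_Icc.exists_isMinOn ⟨u, left_mem_Icc.2 huv⟩ hGc
  have hminG : ∀ s ∈ Icc u v, G r₀ ≤ G s := fun s hs => isMinOn_iff.mp hmin s hs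
  obtain ⟨m, hm⟩ : ∃ m : ℝ, m = G r₀ := ⟨_, rfl⟩
  have hmpos : 0 < m := by
    have := hF r₀ hr₀; rw [hm]; simp only [hG]; linarith
  obtain ⟨K₁, hK₁⟩ : ∃ K : ℝ, K = A₁*v^p + C₁ := ⟨_, rfl⟩
  obtain ⟨K₂, hK₂⟩ : ∃ K : ℝ, K = A₂ + C₂*v^p := ⟨_, rfl⟩
  have hvp : 0 ≤ v^p := Real.rpow_nonneg (le_trans hu huv) p
  have hK₁p : 0 < K₁ := by rw [hK₁]; positivity
  have hK₂p : 0 < K₂ := by rw [hK₂]; positivity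
  obtain ⟨ε, hε⟩ : ∃ e : ℝ, e = min (m/(K₁+K₂+1)) (min C₁ A₂) := ⟨_, rfl⟩
  have hεpos : 0 < ε := by rw [hε]; exact lt_min (by positivity) (lt_min hC₁ hA₂)
  have hεC : ε ≤ C₁ := hε ▸ le_trans (min_le_right _ _) (min_le_left _ _)
  have hεA : ε ≤ A₂ := hε ▸ le_trans (min_le_right _ _) (min_le_right _ _)
  have hεm : ε*(K₁+K₂) ≤ m := by
    have h1 : ε ≤ m/(K₁+K₂+1) := hε ▸ min_le_left _ _
    rw [le_div_iff₀ (by positivity)] at h1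
    nlinarith
  refine ⟨ε/2, by positivity, max 1 ((2*|T₁| + 2*|T₂| + 1)/ε), le_max_left _ _, ?_⟩
  intro z₁ z₂ Δ₁ Δ₂ hz₁ hz₂ hlo hhi hA
  have hz₂1 : (1:ℝ) ≤ z₂ := le_trans (le_max_left _ _) hA
  obtain ⟨r, hr⟩ : ∃ r : ℝ, r = z₁/z₂ := ⟨_, rfl⟩
  have hrIcc : r ∈ Icc u v := by
    rw [hr]; exact ⟨(le_div_iff₀ hz₂).2 (by linarith), (div_le_iff₀ hz₂).2 (by linarith)⟩
  have hr0 : 0 ≤ r := le_trans hu hrIcc.1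
  obtain ⟨X, hX⟩ : ∃ X : ℝ, X = z₂^p := ⟨_, rfl⟩
  have hXpos : 0 < X := hX ▸ Real.rpow_pos_of_pos hz₂ p
  have hz1r : z₁ = r*z₂ := by rw [hr, div_mul_cancel₀ _ hz₂.ne']
  have hid1 : z₁^p = r^p * X := by rw [hz1r, Real.mul_rpow hr0 hz₂.le, hX]
  have hid2 : z₂^(p-1) = X/z₂ := by rw [hX]; exact Real.rpow_sub_one hz₂.ne' p
  have hid4 : z₁*z₂^(p-1) = r*X := by rw [hz1r, hid2]; field_simp; try ring
  have hid5 : z₂*z₁^(p-1) = r^(p-1)*X := by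
    rw [hz1r, Real.mul_rpow hr0 hz₂.le, hid2]; field_simp; try ring
  have hgap : ((E₁*r + E₂*r^(p-1))/2)^2 + m ≤ (A₁*r^p + C₁)*(A₂ + C₂*r^p) := by
    have h3 := hminG r hrIcc
    rw [← hm] at h3
    simp only [hG] at h3
    linarith
  have hrp : 0 ≤ r^p := Real.rpow_nonneg hr0 p
  have hrvp : r^p ≤ v^p := Real.rpow_le_rpow hr0 hrIcc.2 (by linarith)
  have hα₁K : A₁*r^p + C₁ ≤ K₁ := by
    rw [hK₁]; have := mul_le_mul_of_nonneg_left hrvp hA₁; linarith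
  have hα₂K : A₂ + C₂*r^p ≤ K₂ := by
    rw [hK₂]; have := mul_le_mul_of_nonneg_left hrvp hC₂; linarith
  have hα₁lb : C₁ ≤ A₁*r^p + C₁ := by have := mul_nonneg hA₁ hrp; linarith
  have hα₂lb : A₂ ≤ A₂ + C₂*r^p := by have := mul_nonneg hC₂ hrp; linarith
  have hXz₂ : z₂ ≤ X := by
    rw [hX]
    calc z₂ = z₂^(1:ℝ) := (Real.rpow_one z₂).symm
    _ ≤ z₂^p := Real.rpow_le_rpow_of_exponent_le hz₂1 hp.le
  have hεz₂X : ε*z₂ ≤ ε*X := mul_le_mul_of_nonneg_left hXz₂ hεpos.le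
  have hTsum : 2*|T₁| + 2*|T₂| + 1 ≤ ε*z₂ := by
    have h1 : (2*|T₁| + 2*|T₂| + 1)/ε ≤ z₂ := le_trans (le_max_right _ _) hA
    rw [div_le_iff₀ hεpos] at h1; linarith
  have hT₁ : |T₁| ≤ (ε/2)*X := by have := abs_nonneg T₂; linarith
  have hT₂ : |T₂| ≤ (ε/2)*X := by have := abs_nonneg T₁; linarith
  have key := master_core (A₁*r^p + C₁) (A₂ + C₂*r^p) (E₁*r + E₂*r^(p-1)) T₁ T₂ K₁ K₂ m ε z₂ X Δ₁ Δ₂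
    hXpos hεpos hgap hα₁K hα₂K hα₁lb hα₂lb hεz₂X hT₁ hT₂ hεC hεA hεm
  rw [show E₁*z₁*z₂^(p-1) = E₁*(z₁*z₂^(p-1)) by ring,
     show E₂*z₂*z₁^(p-1) = E₂*(z₂*z₁^(p-1)) by ring, hid4, hid5, hid1, ← hX]
  linarith [key]

lemma gap_pos_nbhd (p : ℝ) (hp : 1 < p) (A₁ C₁ A₂ C₂ E₁ E₂ : ℝ) (r₀ : ℝ)
    (h : ((E₁*r₀ + E₂*r₀^(p-1))/2)^2 < (A₁*r₀^p + C₁)*(A₂ + C₂*r₀^p)) :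
    ∃ δ > 0, ∀ r ∈ Icc (r₀-δ) (r₀+δ),
      ((E₁*r + E₂*r^(p-1))/2)^2 < (A₁*r^p + C₁)*(A₂ + C₂*r^p) := by
  set G : ℝ → ℝ := fun r => (A₁*r^p + C₁)*(A₂ + C₂*r^p) - ((E₁*r + E₂*r^(p-1))/2)^2 with hG
  have hGc : ContinuousAt G r₀ := by
    have h1 : ContinuousAt (fun r : ℝ => r^p) r₀ :=
      Real.continuousAt_rpow_const r₀ p (Or.inr (by linarith))
    have h2 : ContinuousAt (fun r : ℝ => r^(p-1)) r₀ :=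
      Real.continuousAt_rpow_const r₀ (p-1) (Or.inr (by linarith))
    fun_prop
  have hGpos : 0 < G r₀ := by simp only [hG]; linarith
  have hnhds : G ⁻¹' (Ioi 0) ∈ nhds r₀ := hGc.preimage_mem_nhds (Ioi_mem_nhds hGpos)
  obtain ⟨ε, hε, hball⟩ := Metric.mem_nhds_iff.mp hnhds
  refine ⟨ε/2, by positivity, fun r hr => ?_⟩
  have hmem : r ∈ Metric.ball r₀ ε := by
    rw [Metric.mem_ball, Real.dist_eq]
    rw [mem_Icc] at hr
    rw [abs_sub_lt_iff]; constructor <;> linarith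
  have := hball hmem
  simp only [mem_preimage, mem_Ioi, hG] at this
  linarith

lemma convex_min_le (x y t : ℝ) (h0 : 0 ≤ t) (h1 : t ≤ 1) : min x y ≤ y + t*(x-y) := by
  rcases min_cases x y with ⟨hm, hle⟩ | ⟨hm, hle⟩ <;> rw [hm] <;> nlinarith

lemma mvt_bound (f : ℝ → ℝ) (K : ℝ)
    (hf : ∀ t ∈ Icc (0:ℝ) 1, ∃ D : ℝ, HasDerivAt f D t ∧ D ≤ K) : f 1 - f 0 ≤ K := by
  have hg : MonotoneOn (fun t => K*t - f t) (Icc 0 1) := by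
    apply monotoneOn_of_deriv_nonneg (convex_Icc 0 1)
    · intro t ht
      obtain ⟨D, hD, _⟩ := hf t ht
      exact ((((hasDerivAt_id t).const_mul K).sub hD).continuousAt).continuousWithinAt
    · intro t ht
      rw [interior_Icc] at ht
      obtain ⟨D, hD, _⟩ := hf t (Ioo_subset_Icc_self ht)
      exact (((hasDerivAt_id t).const_mul K).sub hD).differentiableAt.differentiableWithinAt
    · intro t ht
      rw [interior_Icc] at ht
      obtain ⟨D, hD, hDK⟩ := hf t (Ioo_subset_Icc_self ht)
      have hd : HasDerivAt (fun t => K*t - f t) (K*1 - D) t :=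
        ((hasDerivAt_id t).const_mul K).sub hD
      rw [hd.deriv]; linarith
  have := hg (left_mem_Icc.2 zero_le_one) (right_mem_Icc.2 zero_le_one) zero_le_one
  simp only at this; linarith

lemma hasDeriv_seg (τ₁ τ₂ a b c d β γ : ℝ) (hβ0 : 0 < β) (hβ1 : β < 1)
    (w₁ w₂ d₁ d₂ t : ℝ) (h₁ : 0 < w₁ + t*d₁) (h₂ : 0 < w₂ + t*d₂) :
    HasDerivAt (fun s => dot2 (psiLV τ₁ τ₂ a b c d β γ (w₁ + s*d₁, w₂ + s*d₂)) (d₁, d₂))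
      ((β*τ₁ - a*(1+β)*(w₁+t*d₁)^(1/β) - β*(c*γ^(-(1/β)))*(w₂+t*d₂)^(1/β))*d₁^2
       + (β*τ₂ - (b*γ^(-(1/β)))*(1+β)*(w₂+t*d₂)^(1/β) - β*d*(w₁+t*d₁)^(1/β))*d₂^2
       - ((c*γ^(-(1/β)))*(w₁+t*d₁)*(w₂+t*d₂)^(1/β-1)
          + d*(w₂+t*d₂)*(w₁+t*d₁)^(1/β-1))*(d₁*d₂)) t := by
  have hβ : β ≠ 0 := hβ0.ne'
  have hp : (1:ℝ) ≤ 1/β := by rw [le_div_iff₀ hβ0]; linarith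
  have hZ1 : HasDerivAt (fun s => w₁ + s*d₁) d₁ t := by
    simpa using ((hasDerivAt_id t).mul_const d₁).const_add w₁
  have hZ2 : HasDerivAt (fun s => w₂ + s*d₂) d₂ t := by
    simpa using ((hasDerivAt_id t).mul_const d₂).const_add w₂
  have hZ1p : HasDerivAt (fun s => (w₁+s*d₁)^(1/β)) (d₁*(1/β)*(w₁+t*d₁)^(1/β-1)) t :=
    hZ1.rpow_const (Or.inr hp)
  have hZ2p : HasDerivAt (fun s => (w₂+s*d₂)^(1/β)) (d₂*(1/β)*(w₂+t*d₂)^(1/β-1)) t :=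
    hZ2.rpow_const (Or.inr hp)
  have hin1 : HasDerivAt (fun s => τ₁ - a*(w₁+s*d₁)^(1/β) - (c*γ^(-(1/β)))*(w₂+s*d₂)^(1/β))
      (-(a*(d₁*(1/β)*(w₁+t*d₁)^(1/β-1))) - (c*γ^(-(1/β)))*(d₂*(1/β)*(w₂+t*d₂)^(1/β-1))) t :=
    ((hZ1p.const_mul a).const_sub τ₁).sub (hZ2p.const_mul (c*γ^(-(1/β))))
  have hin2 : HasDerivAt (fun s => τ₂ - (b*γ^(-(1/β)))*(w₂+s*d₂)^(1/β) - d*(w₁+s*d₁)^(1/β))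
      (-((b*γ^(-(1/β)))*(d₂*(1/β)*(w₂+t*d₂)^(1/β-1))) - d*(d₁*(1/β)*(w₁+t*d₁)^(1/β-1))) t :=
    ((hZ2p.const_mul (b*γ^(-(1/β)))).const_sub τ₂).sub (hZ1p.const_mul d)
  have ht1 : HasDerivAt (fun s => β*(w₁+s*d₁) *
      (τ₁ - a*(w₁+s*d₁)^(1/β) - (c*γ^(-(1/β)))*(w₂+s*d₂)^(1/β)) * d₁) _ t :=
    ((hZ1.const_mul β).mul hin1).mul_const d₁
  have ht2 : HasDerivAt (fun s => β*(w₂+s*d₂) *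
      (τ₂ - (b*γ^(-(1/β)))*(w₂+s*d₂)^(1/β) - d*(w₁+s*d₁)^(1/β)) * d₂) _ t :=
    ((hZ2.const_mul β).mul hin2).mul_const d₂
  have htot := ht1.add ht2
  have hfun : (fun s => dot2 (psiLV τ₁ τ₂ a b c d β γ (w₁ + s*d₁, w₂ + s*d₂)) (d₁, d₂)) =
      (fun s => β*(w₁+s*d₁) * (τ₁ - a*(w₁+s*d₁)^(1/β) - (c*γ^(-(1/β)))*(w₂+s*d₂)^(1/β)) * d₁
        + β*(w₂+s*d₂) * (τ₂ - (b*γ^(-(1/β)))*(w₂+s*d₂)^(1/β) - d*(w₁+s*d₁)^(1/β)) * d₂) := by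
    funext s
    simp only [psiLV, dot2]
  rw [hfun]
  refine htot.congr_deriv ?_
  have e₁ : (w₁+t*d₁)^(1/β) = (w₁+t*d₁)*(w₁+t*d₁)^(1/β-1) := by
    rw [Real.rpow_sub_one h₁.ne']; field_simp
  have e₂ : (w₂+t*d₂)^(1/β) = (w₂+t*d₂)*(w₂+t*d₂)^(1/β-1) := by
    rw [Real.rpow_sub_one h₂.ne']; field_simp
  rw [e₁, e₂]
  field_simp
  ring

lemma nrm2_nonneg (u : ℝ × ℝ) : 0 ≤ nrm2 u := Real.sqrt_nonneg _

lemma nrm_dom (y : ℝ × ℝ) (k : ℝ) (h1 : 0 ≤ y.1) (h2 : 0 ≤ y.2) (hk : y.1 ≤ k*y.2) :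
    nrm2 y ≤ (k+1)*y.2 := by
  have hk0 : 0 ≤ k*y.2 := le_trans h1 hk
  rw [nrm2]
  have hle : y.1^2 + y.2^2 ≤ ((k+1)*y.2)^2 := by nlinarith
  calc Real.sqrt (y.1^2 + y.2^2) ≤ Real.sqrt (((k+1)*y.2)^2) := Real.sqrt_le_sqrt hle
  _ = (k+1)*y.2 := Real.sqrt_sq (by nlinarith)

lemma cone_case (τ₁ τ₂ a b c d β γ : ℝ) (hβ0 : 0 < β) (hβ1 : β < 1)
    (u v μc Ac Cd : ℝ) (hμc : 0 < μc) (hAc : 1 ≤ Ac) (hCd : 1 ≤ Cd)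
    (hmaster : ∀ z₁ z₂ Δ₁ Δ₂ : ℝ, 0 < z₁ → 0 < z₂ → u*z₂ ≤ z₁ → z₁ ≤ v*z₂ → Ac ≤ z₂ →
      (β*τ₁ - a*(1+β)*z₁^(1/β) - β*(c*γ^(-(1/β)))*z₂^(1/β))*Δ₁^2
      + (β*τ₂ - (b*γ^(-(1/β)))*(1+β)*z₂^(1/β) - β*d*z₁^(1/β))*Δ₂^2
      - ((c*γ^(-(1/β)))*z₁*z₂^(1/β-1) + d*z₂*z₁^(1/β-1))*(Δ₁*Δ₂) ≤ -(μc*z₂)*(Δ₁^2+Δ₂^2))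
    (y y' : ℝ × ℝ) (hy1 : 0 < y.1) (hy2 : 0 < y.2) (hy1' : 0 < y'.1) (hy2' : 0 < y'.2)
    (hyl : u*y.2 ≤ y.1) (hyu : y.1 ≤ v*y.2) (hyl' : u*y'.2 ≤ y'.1) (hyu' : y'.1 ≤ v*y'.2)
    (hny : Ac*Cd ≤ nrm2 y) (hny' : Ac*Cd ≤ nrm2 y')
    (hdom : nrm2 y ≤ Cd*y.2) (hdom' : nrm2 y' ≤ Cd*y'.2) :
    dot2 (psiLV τ₁ τ₂ a b c d β γ y - psiLV τ₁ τ₂ a b c d β γ y') (y - y') ≤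
      -(μc/Cd * min (nrm2 y) (nrm2 y')) * nrm2 (y - y') ^ 2 := by
  have hCd0 : 0 < Cd := by linarith
  obtain ⟨mn, hmn⟩ : ∃ m : ℝ, m = min (nrm2 y) (nrm2 y') := ⟨_, rfl⟩
  have hmnle : mn ≤ nrm2 y := hmn ▸ min_le_left _ _
  have hmnle' : mn ≤ nrm2 y' := hmn ▸ min_le_right _ _
  have hmnge : Ac*Cd ≤ mn := hmn ▸ le_min hny hny'
  have hmn0 : 0 < mn := lt_of_lt_of_le (by nlinarith) hmnge
  have hy2dom : mn/Cd ≤ y.2 := by rw [div_le_iff₀ hCd0]; nlinarith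
  have hy2dom' : mn/Cd ≤ y'.2 := by rw [div_le_iff₀ hCd0]; nlinarith
  have hAcmn : Ac ≤ mn/Cd := by rw [le_div_iff₀ hCd0]; linarith
  set f : ℝ → ℝ := fun s => dot2 (psiLV τ₁ τ₂ a b c d β γ
      (y'.1 + s*(y.1 - y'.1), y'.2 + s*(y.2 - y'.2))) (y.1 - y'.1, y.2 - y'.2) with hfdef
  obtain ⟨S, hS⟩ : ∃ S : ℝ, S = (y.1 - y'.1)^2 + (y.2 - y'.2)^2 := ⟨_, rfl⟩
  have hS0 : 0 ≤ S := by rw [hS]; positivity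
  have hKey : f 1 - f 0 ≤ -(μc*(mn/Cd))*S := by
    apply mvt_bound
    intro t ht
    obtain ⟨ht0, ht1⟩ := ht
    have hz1 : 0 < y'.1 + t*(y.1 - y'.1) :=
      lt_of_lt_of_le (lt_min hy1 hy1') (convex_min_le y.1 y'.1 t ht0 ht1)
    have hz2min : min y.2 y'.2 ≤ y'.2 + t*(y.2 - y'.2) := convex_min_le y.2 y'.2 t ht0 ht1
    have hz2 : 0 < y'.2 + t*(y.2 - y'.2) := lt_of_lt_of_le (lt_min hy2 hy2') hz2min
    have hz2ge : mn/Cd ≤ y'.2 + t*(y.2 - y'.2) :=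
      le_trans (le_min hy2dom hy2dom') hz2min
    have hz2Ac : Ac ≤ y'.2 + t*(y.2 - y'.2) := le_trans hAcmn hz2ge
    have hlo : u*(y'.2 + t*(y.2 - y'.2)) ≤ y'.1 + t*(y.1 - y'.1) := by
      nlinarith [mul_nonneg (by linarith : (0:ℝ) ≤ 1 - t) (sub_nonneg.2 hyl'),
        mul_nonneg ht0 (sub_nonneg.2 hyl)]
    have hhi : y'.1 + t*(y.1 - y'.1) ≤ v*(y'.2 + t*(y.2 - y'.2)) := by
      nlinarith [mul_nonneg (by linarith : (0:ℝ) ≤ 1 - t) (sub_nonneg.2 hyu'),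
        mul_nonneg ht0 (sub_nonneg.2 hyu)]
    refine ⟨_, hasDeriv_seg τ₁ τ₂ a b c d β γ hβ0 hβ1 y'.1 y'.2 (y.1-y'.1) (y.2-y'.2) t hz1 hz2, ?_⟩
    have hm := hmaster (y'.1 + t*(y.1 - y'.1)) (y'.2 + t*(y.2 - y'.2))
      (y.1 - y'.1) (y.2 - y'.2) hz1 hz2 hlo hhi hz2Ac
    have hstep : μc*(mn/Cd) ≤ μc*(y'.2 + t*(y.2 - y'.2)) :=
      mul_le_mul_of_nonneg_left hz2ge hμc.le
    have hSS : (y.1 - y'.1)^2 + (y.2 - y'.2)^2 = S := hS.symm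
    rw [hSS] at hm
    nlinarith [hm, hstep, hS0]
  have hf1 : f 1 = dot2 (psiLV τ₁ τ₂ a b c d β γ y) (y.1 - y'.1, y.2 - y'.2) := by
    rw [hfdef]
    simp only
    congr 1
    rw [Prod.ext_iff]
    constructor <;> simp <;> ring
  have hf0 : f 0 = dot2 (psiLV τ₁ τ₂ a b c d β γ y') (y.1 - y'.1, y.2 - y'.2) := by
    rw [hfdef]
    simp only
    congr 1
    rw [Prod.ext_iff]
    constructor <;> simp
  have hnrmsq : nrm2 (y - y')^2 = S := by
    rw [hS, nrm2]
    rw [Real.sq_sqrt (by positivity)]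
    simp [Prod.fst_sub, Prod.snd_sub]
  have hdot : dot2 (psiLV τ₁ τ₂ a b c d β γ y - psiLV τ₁ τ₂ a b c d β γ y') (y - y')
      = f 1 - f 0 := by
    rw [hf1, hf0]
    simp only [dot2, Prod.fst_sub, Prod.snd_sub]
    ring
  rw [hdot, hnrmsq, ← hmn]
  have heq : -(μc/Cd * mn) * S = -(μc*(mn/Cd))*S := by ring
  rw [heq]
  exact hKey

lemma gap_at_rstar (a b c d β γ : ℝ) (ha : 0<a) (hb : 0<b) (hc : 0<c) (hd : 0<d) (hγ : 0<γ)
    (hβ0 : 0<β) (hβ1 : β<1) (hβ' : β ≠ 1/2)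
    (hq : 0 < 4*a*b*(1+β)^2 + 4*(β^2-1)*c*d) :
    ((c*γ^(-(1/β))*(((d*γ^2/c)^(1/(2*β-1)))^β/γ) + d*(((d*γ^2/c)^(1/(2*β-1)))^β/γ)^(1/β-1))/2)^2
      < (a*(1+β)*(((d*γ^2/c)^(1/(2*β-1)))^β/γ)^(1/β) + β*(c*γ^(-(1/β))))
        * (b*γ^(-(1/β))*(1+β) + β*d*(((d*γ^2/c)^(1/(2*β-1)))^β/γ)^(1/β)) := by
  have hβne : β ≠ 0 := hβ0.ne'
  have h2β : 2*β - 1 ≠ 0 := by intro h; apply hβ'; linarith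
  have hbase : 0 < d*γ^2/c := by positivity
  obtain ⟨xs, hxsdef⟩ : ∃ x : ℝ, x = (d*γ^2/c)^(1/(2*β-1)) := ⟨_, rfl⟩
  have hxs : 0 < xs := hxsdef ▸ Real.rpow_pos_of_pos hbase _
  obtain ⟨rs, hrsdef⟩ : ∃ r : ℝ, r = xs^β/γ := ⟨_, rfl⟩
  have hrs : 0 < rs := hrsdef ▸ div_pos (Real.rpow_pos_of_pos hxs β) hγ
  have hg : 0 < γ^(-(1/β)) := Real.rpow_pos_of_pos hγ _
  rw [← hxsdef, ← hrsdef]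
  have hL : (2*β-1)*Real.log xs = Real.log d + 2*Real.log γ - Real.log c := by
    rw [hxsdef, Real.log_rpow hbase, Real.log_div (by positivity) hc.ne',
      Real.log_mul hd.ne' (by positivity), Real.log_pow]
    field_simp
    norm_num
  have hlogrs : Real.log rs = β*Real.log xs - Real.log γ := by
    rw [hrsdef, Real.log_div (by positivity) hγ.ne', Real.log_rpow hxs]
  have hkey : c*γ^(-(1/β))*rs = d*rs^(1/β-1) := by
    apply Real.log_injOn_pos (mem_Ioi.2 (by positivity)) (mem_Ioi.2 (by positivity))
    rw [Real.log_mul (by positivity) hrs.ne', Real.log_mul hc.ne' hg.ne',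
      Real.log_rpow hγ, Real.log_mul hd.ne' (Real.rpow_pos_of_pos hrs _).ne',
      Real.log_rpow hrs, hlogrs]
    have hinv : (1/β)*β = 1 := by field_simp
    linear_combination hL - Real.log xs * hinv
  have e1 : rs^(1/β) = rs * rs^(1/β-1) := by
    rw [Real.rpow_sub_one hrs.ne']; field_simp
  have hsq : (c*γ^(-(1/β))*rs)^2 = c*γ^(-(1/β))*d*rs^(1/β) := by
    rw [sq]
    nth_rewrite 2 [hkey]
    rw [e1]; ring
  rw [← hkey]
  have hred : ((c*γ^(-(1/β))*rs + c*γ^(-(1/β))*rs)/2)^2 = c*γ^(-(1/β))*d*rs^(1/β) := by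
    rw [← hsq]; ring
  rw [hred]
  obtain ⟨S, hSdef⟩ : ∃ S : ℝ, S = rs^(1/β) := ⟨_, rfl⟩
  have hSpos : 0 < S := hSdef ▸ Real.rpow_pos_of_pos hrs _
  obtain ⟨g, hgdef⟩ : ∃ g : ℝ, g = γ^(-(1/β)) := ⟨_, rfl⟩
  have hgpos : 0 < g := hgdef ▸ hg
  rw [← hSdef, ← hgdef]
  nlinarith [mul_pos (mul_pos hgpos hSpos) hq,
    mul_nonneg (mul_nonneg (mul_nonneg (mul_nonneg ha.le hβ0.le) hd.le)
      (by linarith : (0:ℝ) ≤ 1+β)) (sq_nonneg S),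
    mul_nonneg (mul_nonneg (mul_nonneg (mul_nonneg hβ0.le hb.le) hc.le)
      (by linarith : (0:ℝ) ≤ 1+β)) (sq_nonneg g)]

lemma isOpen_coneL (k : ℝ) : IsOpen {z : ℝ × ℝ | 0 < z.1 ∧ 0 < z.2 ∧ z.1 < k*z.2} :=
  (isOpen_lt continuous_const continuous_fst).and
    ((isOpen_lt continuous_const continuous_snd).and
      (isOpen_lt continuous_fst (continuous_const.mul continuous_snd)))

lemma isOpen_coneM (k₁ k₂ : ℝ) :
    IsOpen {z : ℝ × ℝ | 0 < z.1 ∧ 0 < z.2 ∧ k₁*z.2 < z.1 ∧ z.1 < k₂*z.2} :=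
  (isOpen_lt continuous_const continuous_fst).and
    ((isOpen_lt continuous_const continuous_snd).and
      ((isOpen_lt (continuous_const.mul continuous_snd) continuous_fst).and
        (isOpen_lt continuous_fst (continuous_const.mul continuous_snd))))

lemma isOpen_coneH (k : ℝ) : IsOpen {z : ℝ × ℝ | 0 < z.1 ∧ 0 < z.2 ∧ z.2 < k*z.1} :=
  (isOpen_lt continuous_const continuous_fst).and
    ((isOpen_lt continuous_const continuous_snd).and
      (isOpen_lt continuous_snd (continuous_const.mul continuous_fst)))

lemma cone_disj2 (v w z₁ z₂ : ℝ) (hv : 0 < v) (hvw : v*w ≤ 1) (hz1 : 0 < z₁)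
    (h1 : z₁ < v*z₂) (h2 : z₂ < w*z₁) : False := by nlinarith

/-- Strengthened concavity estimate on the connected components of
`F_{β,γ}(𝒞_{η,β,γ})` far from the origin. -/
theorem stmt2 (τ₁ τ₂ a b c d : ℝ) (ha : 0 < a) (hb : 0 < b) (hc : 0 < c) (hd : 0 < d)
    (γ : ℝ) (hγ : 0 < γ) (β : ℝ) (hβ : β ∈ Set.Ioo (0 : ℝ) 1) (hβ' : β ≠ 1 / 2)
    (hq : 0 < 4 * a * b * (1 + β) ^ 2 + 4 * (β ^ 2 - 1) * c * d) :
    ∃ η > 0, ∃ A > 0, ∃ μ > 0,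
      ∀ y ∈ FLV β γ '' CLV c d β γ η,
        ∀ y' ∈ connectedComponentIn (FLV β γ '' CLV c d β γ η) y,
          A ≤ nrm2 y → A ≤ nrm2 y' →
            dot2 (psiLV τ₁ τ₂ a b c d β γ y - psiLV τ₁ τ₂ a b c d β γ y') (y - y') ≤
              -μ * min (nrm2 y) (nrm2 y') * nrm2 (y - y') ^ 2 := by
  obtain ⟨hβ0, hβ1⟩ := hβ
  have hβne : β ≠ 0 := hβ0.ne'
  have hp : (1:ℝ) < 1/β := by rw [lt_div_iff₀ hβ0]; linarith
  have h1βne : (1:ℝ)/β ≠ 0 := by positivity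
  have h1β1ne : (1:ℝ)/β - 1 ≠ 0 := by intro h; rw [sub_eq_zero] at h; exact absurd h.symm hp.ne
  have hg : 0 < γ^(-(1/β)) := Real.rpow_pos_of_pos hγ _
  have hbase : 0 < d*γ^2/c := by positivity
  obtain ⟨xs, hxsdef⟩ : ∃ x : ℝ, x = (d*γ^2/c)^(1/(2*β-1)) := ⟨_, rfl⟩
  have hxs : 0 < xs := hxsdef ▸ Real.rpow_pos_of_pos hbase _
  obtain ⟨rs, hrsdef⟩ : ∃ r : ℝ, r = xs^β/γ := ⟨_, rfl⟩
  have hrs : 0 < rs := hrsdef ▸ div_pos (Real.rpow_pos_of_pos hxs β) hγ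
  -- gap at zero for the L cone
  have hgapL0 : ((c*γ^(-(1/β))*(0:ℝ) + d*(0:ℝ)^(1/β-1))/2)^2
      < (a*(1+β)*(0:ℝ)^(1/β) + β*(c*γ^(-(1/β))))*(b*γ^(-(1/β))*(1+β) + β*d*(0:ℝ)^(1/β)) := by
    rw [Real.zero_rpow h1βne, Real.zero_rpow h1β1ne]
    simp only [mul_zero, add_zero, zero_add, zero_div]
    rw [zero_pow (by norm_num)]
    positivity
  obtain ⟨δL, hδL0, hFL⟩ := gap_pos_nbhd (1/β) hp (a*(1+β)) (β*(c*γ^(-(1/β))))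
    (b*γ^(-(1/β))*(1+β)) (β*d) (c*γ^(-(1/β))) d 0 hgapL0
  -- gap at zero for the H cone (swapped coordinates, with γ' = 1)
  have hgapH0 : ((d*(1:ℝ)^(-(1/β))*(0:ℝ) + c*γ^(-(1/β))*(0:ℝ)^(1/β-1))/2)^2
      < (b*γ^(-(1/β))*(1+β)*(0:ℝ)^(1/β) + β*(d*(1:ℝ)^(-(1/β))))
        * (a*(1:ℝ)^(-(1/β))*(1+β) + β*(c*γ^(-(1/β)))*(0:ℝ)^(1/β)) := by
    rw [Real.zero_rpow h1βne, Real.zero_rpow h1β1ne, Real.one_rpow]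
    simp only [mul_zero, add_zero, zero_add, zero_div, mul_one]
    rw [zero_pow (by norm_num)]
    positivity
  obtain ⟨δH, hδH0, hFH⟩ := gap_pos_nbhd (1/β) hp (b*γ^(-(1/β))*(1+β)) (β*(d*(1:ℝ)^(-(1/β))))
    (a*(1:ℝ)^(-(1/β))*(1+β)) (β*(c*γ^(-(1/β)))) (d*(1:ℝ)^(-(1/β))) (c*γ^(-(1/β))) 0 hgapH0
  -- gap at rs for the M cone
  have hgapM0 := gap_at_rstar a b c d β γ ha hb hc hd hγ hβ0 hβ1 hβ'
    hq
  rw [← hxsdef, ← hrsdef] at hgapM0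
  obtain ⟨δM', hδM'0, hFM'⟩ := gap_pos_nbhd (1/β) hp (a*(1+β)) (β*(c*γ^(-(1/β))))
    (b*γ^(-(1/β))*(1+β)) (β*d) (c*γ^(-(1/β))) d rs hgapM0
  obtain ⟨δM, hδMdef⟩ : ∃ x : ℝ, x = min δM' (rs/2) := ⟨_, rfl⟩
  have hδM0 : 0 < δM := hδMdef ▸ lt_min hδM'0 (by positivity)
  have hδMδ : δM ≤ δM' := hδMdef ▸ min_le_left _ _
  have hδMrs : δM ≤ rs/2 := hδMdef ▸ min_le_right _ _
  -- master estimates for the three cones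
  obtain ⟨μL, hμL, AL, hAL, hmL⟩ := master (1/β) hp (a*(1+β)) (β*(c*γ^(-(1/β))))
    (b*γ^(-(1/β))*(1+β)) (β*d) (c*γ^(-(1/β))) d (β*τ₁) (β*τ₂)
    (by positivity) (by positivity) (by positivity) (by positivity) 0 δL le_rfl hδL0.le
    (fun r hr => hFL r ⟨by linarith only [hr.1, hδL0], by linarith only [hr.2]⟩)
  obtain ⟨μM, hμM, AM, hAM, hmM⟩ := master (1/β) hp (a*(1+β)) (β*(c*γ^(-(1/β))))
    (b*γ^(-(1/β))*(1+β)) (β*d) (c*γ^(-(1/β))) d (β*τ₁) (β*τ₂)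
    (by positivity) (by positivity) (by positivity) (by positivity) (rs-δM) (rs+δM)
    (by linarith only [hδMrs, hrs]) (by linarith only [hδM0])
    (fun r hr => hFM' r ⟨by linarith only [hr.1, hδMδ], by linarith only [hr.2, hδMδ]⟩)
  obtain ⟨μH, hμH, AH, hAH, hmH⟩ := master (1/β) hp (b*γ^(-(1/β))*(1+β)) (β*(d*(1:ℝ)^(-(1/β))))
    (a*(1:ℝ)^(-(1/β))*(1+β)) (β*(c*γ^(-(1/β)))) (d*(1:ℝ)^(-(1/β))) (c*γ^(-(1/β))) (β*τ₂) (β*τ₁)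
    (by positivity) (by positivity) (by positivity) (by positivity) 0 δH le_rfl hδH0.le
    (fun r hr => hFH r ⟨by linarith only [hr.1, hδH0], by linarith only [hr.2]⟩)
  -- choice of η via eventually arguments
  have ev2 : ∀ᶠ η in nhdsWithin (0:ℝ) (Ioi 0), η^β/γ < δL := by
    have hcont : ContinuousAt (fun η : ℝ => η^β/γ) 0 :=
      (Real.continuousAt_rpow_const 0 β (Or.inr hβ0.le)).div_const γ
    have h := hcont.tendsto
    simp only [Real.zero_rpow hβne, zero_div] at h
    exact (Filter.Tendsto.eventually_lt_const hδL0 h).filter_mono nhdsWithin_le_nhds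
  have ev3 : ∀ᶠ η in nhdsWithin (0:ℝ) (Ioi 0), γ*η^β < δH := by
    have hcont : ContinuousAt (fun η : ℝ => γ*η^β) 0 :=
      continuousAt_const.mul (Real.continuousAt_rpow_const 0 β (Or.inr hβ0.le))
    have h := hcont.tendsto
    simp only [Real.zero_rpow hβne, mul_zero] at h
    exact (Filter.Tendsto.eventually_lt_const hδH0 h).filter_mono nhdsWithin_le_nhds
  have hcontsub : ContinuousAt (fun η : ℝ => (xs-η)^β/γ) 0 := by
    have h1 : ContinuousAt (fun η : ℝ => xs - η) 0 := by fun_prop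
    have h2 : ContinuousAt (fun t : ℝ => t^β) (xs - 0) := by
      simpa using Real.continuousAt_rpow_const xs β (Or.inl hxs.ne')
    exact (h2.comp h1).div_const γ
  have hcontadd : ContinuousAt (fun η : ℝ => (xs+η)^β/γ) 0 := by
    have h1 : ContinuousAt (fun η : ℝ => xs + η) 0 := by fun_prop
    have h2 : ContinuousAt (fun t : ℝ => t^β) (xs + 0) := by
      simpa using Real.continuousAt_rpow_const xs β (Or.inl hxs.ne')
    exact (h2.comp h1).div_const γ
  have ev4a : ∀ᶠ η in nhdsWithin (0:ℝ) (Ioi 0), rs - δM < (xs-η)^β/γ := by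
    have h := hcontsub.tendsto
    simp only [sub_zero] at h
    rw [← hrsdef] at h
    exact (Filter.Tendsto.eventually_const_lt (by linarith only [hδM0]) h).filter_mono nhdsWithin_le_nhds
  have ev4b : ∀ᶠ η in nhdsWithin (0:ℝ) (Ioi 0), (xs+η)^β/γ < rs + δM := by
    have h := hcontadd.tendsto
    simp only [add_zero] at h
    rw [← hrsdef] at h
    exact (Filter.Tendsto.eventually_lt_const (by linarith only [hδM0]) h).filter_mono nhdsWithin_le_nhds
  have ev5 : ∀ᶠ η in nhdsWithin (0:ℝ) (Ioi 0), 2*η < xs := by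
    have hcont : ContinuousAt (fun η : ℝ => 2*η) 0 := by fun_prop
    have h := hcont.tendsto
    simp only [mul_zero] at h
    exact (Filter.Tendsto.eventually_lt_const hxs h).filter_mono nhdsWithin_le_nhds
  have ev6 : ∀ᶠ η in nhdsWithin (0:ℝ) (Ioi 0), (xs+η)*η < 1 := by
    have hcont : ContinuousAt (fun η : ℝ => (xs+η)*η) 0 := by fun_prop
    have h := hcont.tendsto
    simp only [mul_zero] at h
    exact (Filter.Tendsto.eventually_lt_const one_pos h).filter_mono nhdsWithin_le_nhds
  have ev7 : ∀ᶠ η in nhdsWithin (0:ℝ) (Ioi 0), η < 1 := by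
    exact (Filter.Tendsto.eventually_lt_const one_pos (Filter.tendsto_id)).filter_mono nhdsWithin_le_nhds
  obtain ⟨η, hηmem, h2, h3, h4a, h4b, h5, h6, h7⟩ :=
    (eventually_mem_nhdsWithin.and (ev2.and (ev3.and (ev4a.and (ev4b.and
      (ev5.and (ev6.and ev7))))))).exists
  have hη0 : 0 < η := hηmem
  refine ⟨η, hη0, ?_⟩
  -- the three convex cones in the y variables
  obtain ⟨vL, hvLdef⟩ : ∃ x : ℝ, x = η^β/γ := ⟨_, rfl⟩
  obtain ⟨uM, huMdef⟩ : ∃ x : ℝ, x = (xs-η)^β/γ := ⟨_, rfl⟩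
  obtain ⟨vM, hvMdef⟩ : ∃ x : ℝ, x = (xs+η)^β/γ := ⟨_, rfl⟩
  obtain ⟨wH, hwHdef⟩ : ∃ x : ℝ, x = γ*η^β := ⟨_, rfl⟩
  have hxsη : 0 < xs - η := by linarith only [h5, hη0]
  have hvL0 : 0 < vL := hvLdef ▸ by positivity
  have huM0 : 0 < uM := huMdef ▸ by positivity
  have hvM0 : 0 < vM := hvMdef ▸ by positivity
  have hwH0 : 0 < wH := hwHdef ▸ by positivity
  have hvLδ : vL ≤ δL := hvLdef ▸ h2.le
  have hwHδ : wH ≤ δH := hwHdef ▸ h3.le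
  have huMlo : rs - δM ≤ uM := huMdef ▸ h4a.le
  have hvMhi : vM ≤ rs + δM := hvMdef ▸ h4b.le
  have hvLuM : vL ≤ uM := by
    rw [hvLdef, huMdef]
    have hle : η^β ≤ (xs-η)^β := Real.rpow_le_rpow hη0.le (by linarith only [h5, hη0]) hβ0.le
    gcongr
  have hvLwH : vL*wH ≤ 1 := by
    rw [hvLdef, hwHdef]
    have heq : η^β/γ*(γ*η^β) = (η*η)^β := by
      rw [Real.mul_rpow hη0.le hη0.le]; field_simp
    rw [heq]
    exact Real.rpow_le_one (by positivity) (mul_le_one₀ h7.le hη0.le h7.le) hβ0.le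
  have hvMwH : vM*wH ≤ 1 := by
    rw [hvMdef, hwHdef]
    have heq : (xs+η)^β/γ*(γ*η^β) = ((xs+η)*η)^β := by
      rw [Real.mul_rpow (by linarith only [hxs, hη0]) hη0.le]; field_simp
    rw [heq]
    exact Real.rpow_le_one (by positivity) h6.le hβ0.le
  obtain ⟨TL, hTLdef⟩ : ∃ T : Set (ℝ × ℝ), T = {z : ℝ × ℝ | 0 < z.1 ∧ 0 < z.2 ∧ z.1 < vL*z.2} :=
    ⟨_, rfl⟩
  obtain ⟨TM, hTMdef⟩ : ∃ T : Set (ℝ × ℝ),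
      T = {z : ℝ × ℝ | 0 < z.1 ∧ 0 < z.2 ∧ uM*z.2 < z.1 ∧ z.1 < vM*z.2} := ⟨_, rfl⟩
  obtain ⟨TH, hTHdef⟩ : ∃ T : Set (ℝ × ℝ), T = {z : ℝ × ℝ | 0 < z.1 ∧ 0 < z.2 ∧ z.2 < wH*z.1} :=
    ⟨_, rfl⟩
  have hTLopen : IsOpen TL := hTLdef ▸ isOpen_coneL vL
  have hTMopen : IsOpen TM := hTMdef ▸ isOpen_coneM uM vM
  have hTHopen : IsOpen TH := hTHdef ▸ isOpen_coneH wH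
  -- disjointness
  have dLM : Disjoint TL TM := by
    rw [Set.disjoint_left, hTLdef, hTMdef]
    rintro z ⟨hz1, hz2, hzb⟩ ⟨_, _, hzM, _⟩
    have := mul_le_mul_of_nonneg_right hvLuM hz2.le
    linarith only [this, hzb, hzM]
  have dLH : Disjoint TL TH := by
    rw [Set.disjoint_left, hTLdef, hTHdef]
    rintro z ⟨hz1, hz2, hzb⟩ ⟨_, _, hzH⟩
    exact cone_disj2 vL wH z.1 z.2 hvL0 hvLwH hz1 hzb hzH
  have dMH : Disjoint TM TH := by
    rw [Set.disjoint_left, hTMdef, hTHdef]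
    rintro z ⟨hz1, hz2, _, hzb⟩ ⟨_, _, hzH⟩
    exact cone_disj2 vM wH z.1 z.2 hvM0 hvMwH hz1 hzb hzH
  -- image of the cone is contained in the union
  have hsub : FLV β γ '' CLV c d β γ η ⊆ TL ∪ TM ∪ TH := by
    rintro z ⟨x, hxC, rfl⟩
    obtain ⟨hx1, hx2, hxr⟩ := hxC
    rw [← hxsdef] at hxr
    have hz1 : 0 < x.1^β := Real.rpow_pos_of_pos hx1 β
    have hz2 : 0 < γ*x.2^β := by positivity
    rcases hxr with (hr | hr) | hr
    · left; left
      rw [hTLdef]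
      refine ⟨hz1, hz2, ?_⟩
      rw [mem_Ioo, div_lt_iff₀ hx2] at hr
      have hlt : x.1^β < (η*x.2)^β := Real.rpow_lt_rpow hx1.le hr.2 hβ0
      rw [Real.mul_rpow hη0.le hx2.le] at hlt
      have heq : vL*(γ*x.2^β) = η^β*x.2^β := by rw [hvLdef]; field_simp
      show x.1^β < vL*(γ*x.2^β)
      rw [heq]; exact hlt
    · left; right
      rw [hTMdef]
      rw [mem_Ioo] at hr
      have hrlo : (xs-η)*x.2 < x.1 := (lt_div_iff₀ hx2).1 hr.1
      have hrhi : x.1 < (xs+η)*x.2 := (div_lt_iff₀ hx2).1 hr.2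
      refine ⟨hz1, hz2, ?_, ?_⟩
      · have hlt : ((xs-η)*x.2)^β < x.1^β :=
          Real.rpow_lt_rpow (by positivity) hrlo hβ0
        rw [Real.mul_rpow hxsη.le hx2.le] at hlt
        have heq : uM*(γ*x.2^β) = (xs-η)^β*x.2^β := by rw [huMdef]; field_simp
        show uM*(γ*x.2^β) < x.1^β
        rw [heq]; exact hlt
      · have hlt : x.1^β < ((xs+η)*x.2)^β := Real.rpow_lt_rpow hx1.le hrhi hβ0
        rw [Real.mul_rpow (by linarith) hx2.le] at hlt
        have heq : vM*(γ*x.2^β) = (xs+η)^β*x.2^β := by rw [hvMdef]; field_simp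
        show x.1^β < vM*(γ*x.2^β)
        rw [heq]; exact hlt
    · right
      rw [hTHdef]
      refine ⟨hz1, hz2, ?_⟩
      rw [mem_Ioi, div_lt_div_iff₀ hη0 hx2] at hr
      have hlt2 : x.2 < η*x.1 := by linarith only [hr]
      have hlt : x.2^β < (η*x.1)^β := Real.rpow_lt_rpow hx2.le hlt2 hβ0
      rw [Real.mul_rpow hη0.le hx1.le] at hlt
      have heq : wH*x.1^β = γ*(η^β*x.1^β) := by rw [hwHdef]; ring
      show γ*x.2^β < wH*x.1^β
      rw [heq]
      exact mul_lt_mul_of_pos_left hlt hγ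
  -- global constants
  obtain ⟨Afin, hAfindef⟩ : ∃ x : ℝ,
      x = max 1 (max (AL*(δL+1)) (max (AM*(rs+δM+1)) (AH*(δH+1)))) := ⟨_, rfl⟩
  have hAfin1 : (1:ℝ) ≤ Afin := hAfindef ▸ le_max_left _ _
  have hAfinL : AL*(δL+1) ≤ Afin := hAfindef ▸ le_trans (le_max_left _ _) (le_max_right _ _)
  have hAfinM : AM*(rs+δM+1) ≤ Afin := hAfindef ▸
    le_trans (le_trans (le_max_left _ _) (le_max_right _ _)) (le_max_right _ _)
  have hAfinH : AH*(δH+1) ≤ Afin := hAfindef ▸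
    le_trans (le_trans (le_max_right _ _) (le_max_right _ _)) (le_max_right _ _)
  obtain ⟨μfin, hμfindef⟩ : ∃ x : ℝ,
      x = min (μL/(δL+1)) (min (μM/(rs+δM+1)) (μH/(δH+1))) := ⟨_, rfl⟩
  have hμfin0 : 0 < μfin := by
    rw [hμfindef]
    refine lt_min (by positivity) (lt_min (by positivity) (by positivity))
  have hμfinL : μfin ≤ μL/(δL+1) := hμfindef ▸ min_le_left _ _
  have hμfinM : μfin ≤ μM/(rs+δM+1) := hμfindef ▸
    le_trans (min_le_right _ _) (min_le_left _ _)
  have hμfinH : μfin ≤ μH/(δH+1) := hμfindef ▸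
    le_trans (min_le_right _ _) (min_le_right _ _)
  refine ⟨Afin, by linarith only [hAfin1], μfin, hμfin0, ?_⟩
  intro y hy y' hy' hAy hAy'
  have hyS : y ∈ FLV β γ '' CLV c d β γ η := hy
  have hy'S : y' ∈ FLV β γ '' CLV c d β γ η := connectedComponentIn_subset _ _ hy'
  -- min and nrm nonneg facts
  have hmn0 : 0 ≤ min (nrm2 y) (nrm2 y') := le_min (nrm2_nonneg y) (nrm2_nonneg y')
  have hn20 : (0:ℝ) ≤ nrm2 (y - y')^2 := sq_nonneg _
  -- which cone does y belong to?
  rcases hsub hyS with (hyT | hyT) | hyT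
  · -- L cone
    have hcomp : connectedComponentIn (FLV β γ '' CLV c d β γ η) y ⊆ TL := by
      apply IsPreconnected.subset_left_of_subset_union hTLopen (hTMopen.union hTHopen)
        (Set.disjoint_union_right.2 ⟨dLM, dLH⟩)
        (fun z hz => by
          have := hsub (connectedComponentIn_subset _ _ hz)
          simp only [Set.mem_union] at this ⊢
          tauto)
        ⟨y, mem_connectedComponentIn hyS, hyT⟩
        isPreconnected_connectedComponentIn
    have hy'T : y' ∈ TL := hcomp hy'
    rw [hTLdef] at hyT hy'T
    obtain ⟨hy1, hy2, hyb⟩ := hyT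
    obtain ⟨hy1', hy2', hyb'⟩ := hy'T
    have hyu : y.1 ≤ δL*y.2 :=
      le_trans hyb.le (mul_le_mul_of_nonneg_right hvLδ hy2.le)
    have hyu' : y'.1 ≤ δL*y'.2 :=
      le_trans hyb'.le (mul_le_mul_of_nonneg_right hvLδ hy2'.le)
    have hdom : nrm2 y ≤ (δL+1)*y.2 := nrm_dom y δL hy1.le hy2.le hyu
    have hdom' : nrm2 y' ≤ (δL+1)*y'.2 := nrm_dom y' δL hy1'.le hy2'.le hyu'
    have hkey := cone_case τ₁ τ₂ a b c d β γ hβ0 hβ1 0 δL μL AL (δL+1) hμL hAL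
      (by linarith only [hδL0]) hmL y y' hy1 hy2 hy1' hy2'
      (by simpa using hy1.le) hyu (by simpa using hy1'.le) hyu'
      (le_trans hAfinL hAy) (le_trans hAfinL hAy') hdom hdom'
    have hμle : μfin ≤ μL/(δL+1) := hμfinL
    have hmono := mul_le_mul_of_nonneg_right
      (mul_le_mul_of_nonneg_right hμle hmn0) hn20
    linarith only [hkey, hmono]
  · -- M cone
    have hcomp : connectedComponentIn (FLV β γ '' CLV c d β γ η) y ⊆ TM := by
      apply IsPreconnected.subset_left_of_subset_union hTMopen (hTLopen.union hTHopen)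
        (Set.disjoint_union_right.2 ⟨dLM.symm, dMH⟩)
        (fun z hz => by
          have := hsub (connectedComponentIn_subset _ _ hz)
          simp only [Set.mem_union] at this ⊢
          tauto)
        ⟨y, mem_connectedComponentIn hyS, hyT⟩
        isPreconnected_connectedComponentIn
    have hy'T : y' ∈ TM := hcomp hy'
    rw [hTMdef] at hyT hy'T
    obtain ⟨hy1, hy2, hybl, hybu⟩ := hyT
    obtain ⟨hy1', hy2', hybl', hybu'⟩ := hy'T
    have hyl : (rs-δM)*y.2 ≤ y.1 :=
      le_trans (mul_le_mul_of_nonneg_right huMlo hy2.le) hybl.le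
    have hyl' : (rs-δM)*y'.2 ≤ y'.1 :=
      le_trans (mul_le_mul_of_nonneg_right huMlo hy2'.le) hybl'.le
    have hyu : y.1 ≤ (rs+δM)*y.2 :=
      le_trans hybu.le (mul_le_mul_of_nonneg_right hvMhi hy2.le)
    have hyu' : y'.1 ≤ (rs+δM)*y'.2 :=
      le_trans hybu'.le (mul_le_mul_of_nonneg_right hvMhi hy2'.le)
    have hdom : nrm2 y ≤ (rs+δM+1)*y.2 := nrm_dom y (rs+δM) hy1.le hy2.le hyu
    have hdom' : nrm2 y' ≤ (rs+δM+1)*y'.2 := nrm_dom y' (rs+δM) hy1'.le hy2'.le hyu'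
    have hkey := cone_case τ₁ τ₂ a b c d β γ hβ0 hβ1 (rs-δM) (rs+δM) μM AM (rs+δM+1) hμM hAM
      (by linarith only [hrs, hδM0]) hmM y y' hy1 hy2 hy1' hy2' hyl hyu hyl' hyu'
      (le_trans hAfinM hAy) (le_trans hAfinM hAy') hdom hdom'
    have hmono := mul_le_mul_of_nonneg_right
      (mul_le_mul_of_nonneg_right hμfinM hmn0) hn20
    linarith only [hkey, hmono]
  · -- H cone (use coordinate swap)
    have hcomp : connectedComponentIn (FLV β γ '' CLV c d β γ η) y ⊆ TH := by
      apply IsPreconnected.subset_left_of_subset_union hTHopen (hTLopen.union hTMopen)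
        (Set.disjoint_union_right.2 ⟨dLH.symm, dMH.symm⟩)
        (fun z hz => by
          have := hsub (connectedComponentIn_subset _ _ hz)
          simp only [Set.mem_union] at this ⊢
          tauto)
        ⟨y, mem_connectedComponentIn hyS, hyT⟩
        isPreconnected_connectedComponentIn
    have hy'T : y' ∈ TH := hcomp hy'
    rw [hTHdef] at hyT hy'T
    obtain ⟨hy1, hy2, hyb⟩ := hyT
    obtain ⟨hy1', hy2', hyb'⟩ := hy'T
    have hyu : y.2 ≤ δH*y.1 :=
      le_trans hyb.le (mul_le_mul_of_nonneg_right hwHδ hy1.le)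
    have hyu' : y'.2 ≤ δH*y'.1 :=
      le_trans hyb'.le (mul_le_mul_of_nonneg_right hwHδ hy1'.le)
    have hns : nrm2 (y.2, y.1) = nrm2 y := by simp [nrm2, add_comm]
    have hns' : nrm2 (y'.2, y'.1) = nrm2 y' := by simp [nrm2, add_comm]
    have hnsd : nrm2 ((y.2, y.1) - (y'.2, y'.1)) = nrm2 (y - y') := by
      simp [nrm2, Prod.fst_sub, Prod.snd_sub, add_comm]
    have hdom : nrm2 (y.2, y.1) ≤ (δH+1)*y.1 := nrm_dom (y.2, y.1) δH hy2.le hy1.le hyu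
    have hdom' : nrm2 (y'.2, y'.1) ≤ (δH+1)*y'.1 := nrm_dom (y'.2, y'.1) δH hy2'.le hy1'.le hyu'
    have hkey := cone_case τ₂ τ₁ (b*γ^(-(1/β))) a d (c*γ^(-(1/β))) β 1 hβ0 hβ1
      0 δH μH AH (δH+1) hμH hAH (by linarith only [hδH0]) hmH
      (y.2, y.1) (y'.2, y'.1) hy2 hy1 hy2' hy1'
      (by simpa using hy2.le) hyu (by simpa using hy2'.le) hyu'
      (by rw [hns]; exact le_trans hAfinH hAy) (by rw [hns']; exact le_trans hAfinH hAy')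
      hdom hdom'
    rw [hns, hns', hnsd] at hkey
    have hswap : dot2 (psiLV τ₁ τ₂ a b c d β γ y - psiLV τ₁ τ₂ a b c d β γ y') (y - y')
        = dot2 (psiLV τ₂ τ₁ (b*γ^(-(1/β))) a d (c*γ^(-(1/β))) β 1 (y.2, y.1)
            - psiLV τ₂ τ₁ (b*γ^(-(1/β))) a d (c*γ^(-(1/β))) β 1 (y'.2, y'.1))
            ((y.2, y.1) - (y'.2, y'.1)) := by
      simp only [psiLV, dot2, Prod.fst_sub, Prod.snd_sub, Real.one_rpow]
      ring
    rw [hswap]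
    have hmono := mul_le_mul_of_nonneg_right
      (mul_le_mul_of_nonneg_right hμfinH hmn0) hn20
    linarith only [hkey, hmono]
end

section
/- Let x₀ ∈ [0,∞)², and suppose x : [0,∞) → [0,∞)² satisfies x(0) = x₀ and x'(t) = b(x(t)) for all t ≥ 0; let v : [0,∞) → [0,∞) satisfy v(0) = 0 and v'(t) = 1 + x₁(t) + x₂(t) for all t ≥ 0; and let z : [0,∞) → S̄ satisfy z(0) = 𝒦(x₀) and z'(s) = H(z(s)) for all s ≥ 0. Then 𝒦(x(t)) = z(v(t)) for all t ≥ 0. -/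
open Real Set

/-- The competitive Lotka–Volterra vector field. -/
def bLV (τ₁ τ₂ a b c d : ℝ) (x : ℝ × ℝ) : ℝ × ℝ :=
  (x.1 * (τ₁ - a * x.1 - c * x.2), x.2 * (τ₂ - b * x.2 - d * x.1))

/-- The Poincaré compactification map `𝒦`. -/
noncomputable def Kmap (x : ℝ × ℝ) : ℝ × ℝ × ℝ :=
  (x.1 / (1 + x.1 + x.2), x.2 / (1 + x.1 + x.2), 1 / (1 + x.1 + x.2))

/-- The compactified vector field `H` on the closed simplex. -/
def Hfield (τ₁ τ₂ a b c d : ℝ) (y : ℝ × ℝ × ℝ) : ℝ × ℝ × ℝ :=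
  (y.1 * y.2.1 * ((b - c) * y.2.1 + (d - a) * y.1)
      + y.1 * y.2.2 * ((τ₁ - τ₂ - c) * y.2.1 - a * y.1 + τ₁ * y.2.2),
   y.1 * y.2.1 * ((a - d) * y.1 + (c - b) * y.2.1)
      + y.2.1 * y.2.2 * ((τ₂ - τ₁ - d) * y.1 - b * y.2.1 + τ₂ * y.2.2),
   y.2.2 * (a * y.1 ^ 2 + b * y.2.1 ^ 2 + (c + d) * y.1 * y.2.1
      - τ₁ * y.1 * y.2.2 - τ₂ * y.2.1 * y.2.2))

/-- The closed simplex `S̄`. -/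
def Sbar : Set (ℝ × ℝ × ℝ) :=
  {y | y.1 ∈ Set.Icc (0 : ℝ) 1 ∧ y.2.1 ∈ Set.Icc (0 : ℝ) 1 ∧ y.2.2 ∈ Set.Icc (0 : ℝ) 1 ∧
    y.1 + y.2.1 + y.2.2 = 1}

lemma Hfield_lipschitz (τ₁ τ₂ a b c d : ℝ) :
    ∃ K : NNReal, LipschitzOnWith K (Hfield τ₁ τ₂ a b c d) Sbar := by
  have hcd : ContDiff ℝ 1 (Hfield τ₁ τ₂ a b c d) := by
    unfold Hfield; fun_prop
  have hcont : Continuous (fderiv ℝ (Hfield τ₁ τ₂ a b c d)) := hcd.continuous_fderiv one_ne_zero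
  obtain ⟨C, hC⟩ := (isCompact_closedBall (0 : ℝ × ℝ × ℝ) 2).exists_bound_of_continuousOn
    hcont.continuousOn
  refine ⟨NNReal.mk (max C 0) (le_max_right _ _),
    LipschitzOnWith.mono (t := Metric.closedBall (0 : ℝ × ℝ × ℝ) 2) ?_ ?_⟩
  · refine (convex_closedBall _ _).lipschitzOnWith_of_nnnorm_fderiv_le
      (fun y _ => hcd.differentiable one_ne_zero y) (fun y hy => ?_)
    rw [← NNReal.coe_le_coe, coe_nnnorm]
    exact le_trans (hC y hy) (le_max_left _ _)
  · rintro y ⟨h1, h2, h3, _⟩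
    simp only [Metric.mem_closedBall, dist_zero_right, Prod.norm_def, Real.norm_eq_abs,
      max_le_iff, abs_le]
    refine ⟨⟨?_, ?_⟩, ⟨?_, ?_⟩, ?_, ?_⟩ <;>
      [linarith [h1.1]; linarith [h1.2]; linarith [h2.1]; linarith [h2.2];
       linarith [h3.1]; linarith [h3.2]]

lemma Kmap_mem_Sbar {p : ℝ × ℝ} (h1 : 0 ≤ p.1) (h2 : 0 ≤ p.2) : Kmap p ∈ Sbar := by
  have hu : 0 < 1 + p.1 + p.2 := by linarith
  refine ⟨⟨div_nonneg h1 hu.le, (div_le_one hu).mpr (by linarith)⟩,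
    ⟨div_nonneg h2 hu.le, (div_le_one hu).mpr (by linarith)⟩,
    ⟨div_nonneg zero_le_one hu.le, (div_le_one hu).mpr (by linarith)⟩, ?_⟩
  show p.1 / _ + p.2 / _ + 1 / _ = 1
  field_simp
  ring

lemma smul_Hfield_Kmap (τ₁ τ₂ a b c d p q : ℝ) (hp : 0 ≤ p) (hq : 0 ≤ q) :
    (1 + p + q) • Hfield τ₁ τ₂ a b c d (Kmap (p, q)) =
      ((p * (τ₁ - a * p - c * q) * (1 + p + q)
          - p * (p * (τ₁ - a * p - c * q) + q * (τ₂ - b * q - d * p))) / (1 + p + q) ^ 2,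
       (q * (τ₂ - b * q - d * p) * (1 + p + q)
          - q * (p * (τ₁ - a * p - c * q) + q * (τ₂ - b * q - d * p))) / (1 + p + q) ^ 2,
       (0 * (1 + p + q) - 1 * (p * (τ₁ - a * p - c * q) + q * (τ₂ - b * q - d * p)))
          / (1 + p + q) ^ 2) := by
  have hu : (1 + p + q) ≠ 0 := by positivity
  simp only [Kmap, Hfield, Prod.smul_mk, smul_eq_mul, Prod.mk.injEq]
  refine ⟨?_, ?_, ?_⟩ <;> (field_simp; ring)

/-- Poincaré compactification of the Lotka–Volterra flow: `𝒦(x(t)) = z(v(t))`. -/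
theorem stmt3 (τ₁ τ₂ a b c d : ℝ) (ha : 0 ≤ a) (hb : 0 ≤ b) (hc : 0 ≤ c) (hd : 0 ≤ d)
    (x₀ : ℝ × ℝ) (hx₀ : 0 ≤ x₀.1 ∧ 0 ≤ x₀.2)
    (x : ℝ → ℝ × ℝ) (hx0 : x 0 = x₀)
    (hxmem : ∀ t : ℝ, 0 ≤ t → 0 ≤ (x t).1 ∧ 0 ≤ (x t).2)
    (hxder : ∀ t : ℝ, 0 ≤ t → HasDerivAt x (bLV τ₁ τ₂ a b c d (x t)) t)
    (v : ℝ → ℝ) (hv0 : v 0 = 0) (hvmem : ∀ t : ℝ, 0 ≤ t → 0 ≤ v t)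
    (hvder : ∀ t : ℝ, 0 ≤ t → HasDerivAt v (1 + (x t).1 + (x t).2) t)
    (z : ℝ → ℝ × ℝ × ℝ) (hz0 : z 0 = Kmap x₀)
    (hzmem : ∀ s : ℝ, 0 ≤ s → z s ∈ Sbar)
    (hzder : ∀ s : ℝ, 0 ≤ s → HasDerivAt z (Hfield τ₁ τ₂ a b c d (z s)) s) :
    ∀ t : ℝ, 0 ≤ t → Kmap (x t) = z (v t) := by
  obtain ⟨K, hK⟩ := Hfield_lipschitz τ₁ τ₂ a b c d
  set u : ℝ → ℝ := fun s => 1 + (x s).1 + (x s).2 with hudef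
  have hu1 : ∀ s : ℝ, 0 ≤ s → 1 ≤ u s := by
    intro s hs
    have h := hxmem s hs
    simp only [hudef]
    linarith [h.1, h.2]
  -- derivative of Kmap ∘ x
  have hfd : ∀ s : ℝ, 0 ≤ s →
      HasDerivAt (fun r => Kmap (x r)) (u s • Hfield τ₁ τ₂ a b c d (Kmap (x s))) s := by
    intro s hs
    have hx' := hxder s hs
    have h1 : HasDerivAt (fun r => (x r).1) ((x s).1 * (τ₁ - a * (x s).1 - c * (x s).2)) s := by
      simpa [bLV] using (hx'.hasFDerivAt.fst).hasDerivAt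
    have h2 : HasDerivAt (fun r => (x r).2) ((x s).2 * (τ₂ - b * (x s).2 - d * (x s).1)) s := by
      simpa [bLV] using (hx'.hasFDerivAt.snd).hasDerivAt
    have hus : (0 : ℝ) < u s := lt_of_lt_of_le one_pos (hu1 s hs)
    have hud : HasDerivAt (fun r => 1 + (x r).1 + (x r).2)
        ((x s).1 * (τ₁ - a * (x s).1 - c * (x s).2)
          + (x s).2 * (τ₂ - b * (x s).2 - d * (x s).1)) s := (h1.const_add 1).add h2
    have hc1 := h1.div hud hus.ne'
    have hc2 := h2.div hud hus.ne'
    have hc3 := (hasDerivAt_const s (1 : ℝ)).div hud hus.ne'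
    have hcomb := hc1.prodMk (hc2.prodMk hc3)
    have heq := smul_Hfield_Kmap τ₁ τ₂ a b c d (x s).1 (x s).2 (hxmem s hs).1 (hxmem s hs).2
    rw [show Kmap (x s) = Kmap ((x s).1, (x s).2) by rw [Prod.mk.eta]]
    rw [show (u s : ℝ) = 1 + (x s).1 + (x s).2 from rfl, heq]
    exact hcomb
  intro t ht
  -- bound u on [0, t]
  have hxc : ContinuousOn x (Icc 0 t) :=
    fun s hs => ((hxder s hs.1).continuousAt).continuousWithinAt
  have hucont : ContinuousOn u (Icc 0 t) :=
    (continuousOn_const.add (continuous_fst.comp_continuousOn hxc)).add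
      (continuous_snd.comp_continuousOn hxc)
  obtain ⟨C, hC⟩ := (isCompact_Icc : IsCompact (Icc (0 : ℝ) t)).exists_bound_of_continuousOn
    hucont
  set M : ℝ := max C 1 with hMdef
  have hM1 : (1 : ℝ) ≤ M := le_max_right _ _
  have huM : ∀ s ∈ Icc (0 : ℝ) t, u s ≤ M :=
    fun s hs => (le_abs_self _).trans ((hC s hs).trans (le_max_left _ _))
  set w : ℝ → ℝ := fun s => max 1 (min (u s) M) with hwdef
  have hw : ∀ s ∈ Icc (0 : ℝ) t, w s = u s := by
    intro s hs
    simp only [hwdef]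
    rw [min_eq_left (huM s hs), max_eq_right (hu1 s hs.1)]
  have hwb : ∀ s : ℝ, |w s| ≤ M := by
    intro s
    rw [abs_of_nonneg (le_trans zero_le_one (le_max_left _ _))]
    exact max_le hM1 (min_le_right _ _)
  set V : ℝ → (ℝ × ℝ × ℝ) → (ℝ × ℝ × ℝ) := fun s y => w s • Hfield τ₁ τ₂ a b c d y with hVdef
  have hVlip : ∀ s : ℝ, LipschitzOnWith (M.toNNReal * K) (V s) Sbar := by
    intro s
    rw [lipschitzOnWith_iff_dist_le_mul]
    intro y hy y' hy'
    simp only [hVdef]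
    rw [dist_smul₀, Real.norm_eq_abs]
    have h1 := hK.dist_le_mul y hy y' hy'
    have h2 : (((M.toNNReal * K : NNReal)) : ℝ) = M * K := by
      rw [NNReal.coe_mul, Real.coe_toNNReal _ (le_trans zero_le_one hM1)]
    rw [h2, mul_assoc]
    exact mul_le_mul (hwb s) h1 dist_nonneg (le_trans zero_le_one hM1)
  have key := ODE_solution_unique_of_mem_Icc_right (v := V) (s := fun _ => Sbar)
    (K := M.toNNReal * K) (f := fun s => Kmap (x s)) (g := fun s => z (v s))
    (a := 0) (b := t) (fun s _ => hVlip s)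
    (fun s hs => ((hfd s hs.1).continuousAt).continuousWithinAt)
    (fun s hs => by
      have h := (hfd s hs.1).hasDerivWithinAt (s := Ici s)
      simp only [hVdef]
      rwa [hw s ⟨hs.1, hs.2.le⟩])
    (fun s hs => Kmap_mem_Sbar (hxmem s hs.1).1 (hxmem s hs.1).2)
    (fun s hs => (((hzder (v s) (hvmem s hs.1)).continuousAt).comp
      ((hvder s hs.1)).continuousAt).continuousWithinAt)
    (fun s hs => by
      have h := (HasDerivAt.scomp_of_eq s (hzder (v s) (hvmem s hs.1)) (hvder s hs.1) rfl).hasDerivWithinAt (s := Ici s)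
      simp only [hVdef]
      rw [hw s ⟨hs.1, hs.2.le⟩]
      exact h)
    (fun s hs => hzmem (v s) (hvmem s hs.1))
    (by show Kmap (x 0) = z (v 0); rw [hx0, hv0, hz0])
  exact key ⟨ht, le_refl t⟩
end

section
/- Assume a > 0 and b > 0 (and c, d ≥ 0). For every T > 0 there exists a constant c_T > 0 such that for every x₀ ∈ [0,∞)², every solution x : [0,T] → [0,∞)² of x'(t) = b(x(t)) with x(0) = x₀, and every t ∈ (0,T], one has x₁(t) + x₂(t) ≤ c_T / t. The constant c_T does not depend on x₀. -/
open Real Set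

set_option maxHeartbeats 1000000 in
/-- Uniform `c_T / t` bound for the Lotka–Volterra flow, independent of the
initial condition. -/
theorem stmt4 (τ₁ τ₂ a b c d : ℝ) (ha : 0 < a) (hb : 0 < b) (hc : 0 ≤ c) (hd : 0 ≤ d)
    (T : ℝ) (hT : 0 < T) :
    ∃ cT > 0, ∀ x₀ : ℝ × ℝ, 0 ≤ x₀.1 → 0 ≤ x₀.2 →
      ∀ x : ℝ → ℝ × ℝ, x 0 = x₀ →
        (∀ t ∈ Set.Icc (0 : ℝ) T, 0 ≤ (x t).1 ∧ 0 ≤ (x t).2) →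
        (∀ t ∈ Set.Icc (0 : ℝ) T,
          HasDerivWithinAt x (bLV τ₁ τ₂ a b c d (x t)) (Set.Icc (0 : ℝ) T) t) →
        ∀ t ∈ Set.Ioc (0 : ℝ) T, (x t).1 + (x t).2 ≤ cT / t := by
  set m := min a b with hm
  have hm0 : 0 < m := lt_min ha hb
  set τ := max τ₁ τ₂ with hτ
  set τp := max τ 0 with hτp
  have hτp0 : 0 ≤ τp := le_max_right _ _
  set C : ℝ := (2 + τp * T) * (2 / m) with hCdef
  have hC0 : 0 < C := by
    have : 0 < 2 + τp * T := by positivity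
    positivity
  have hmC : m * C = 2 * (2 + τp * T) := by
    rw [hCdef, mul_comm, mul_assoc, div_mul_cancel₀ _ hm0.ne']
    ring
  refine ⟨C, hC0, ?_⟩
  intro x₀ h₀1 h₀2 x hx0 hpos hderiv t₀ ht₀
  set f : ℝ → ℝ := fun t => (x t).1 + (x t).2 with hfdef
  have hderiv' : ∀ s ∈ Icc (0:ℝ) T, HasDerivWithinAt f
      ((bLV τ₁ τ₂ a b c d (x s)).1 + (bLV τ₁ τ₂ a b c d (x s)).2) (Icc (0:ℝ) T) s := by
    intro s hs
    have h := hderiv s hs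
    exact ((ContinuousLinearMap.fst ℝ ℝ ℝ).hasFDerivAt.comp_hasDerivWithinAt s h).add
      ((ContinuousLinearMap.snd ℝ ℝ ℝ).hasFDerivAt.comp_hasDerivWithinAt s h)
  have hcont : ContinuousOn f (Icc (0:ℝ) T) := fun s hs => (hderiv' s hs).continuousWithinAt
  obtain ⟨M, hM⟩ := isCompact_Icc.exists_bound_of_continuousOn hcont
  have hM0 : 0 ≤ M := le_trans (norm_nonneg _) (hM 0 ⟨le_refl 0, hT.le⟩)
  set ε : ℝ := min t₀ (C / (M + 1)) with hεdef
  have hε0 : 0 < ε := lt_min ht₀.1 (by positivity)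
  have hεt₀ : ε ≤ t₀ := min_le_left _ _
  have hεT : ε ≤ T := hεt₀.trans ht₀.2
  -- initial comparison at ε
  have hinit : f ε ≤ C / ε := by
    have h1 : ε * (M + 1) ≤ C := by
      have := min_le_right t₀ (C / (M + 1))
      rw [le_div_iff₀ (by positivity : (0:ℝ) < M + 1)] at this
      exact this
    have h2 : f ε ≤ M := le_trans (le_abs_self _) (hM ε ⟨hε0.le, hεT⟩)
    rw [le_div_iff₀ hε0]
    nlinarith
  -- comparison theorem on [ε, t₀]
  have key : ∀ ⦃s⦄, s ∈ Icc ε t₀ → f s ≤ C / s := by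
    refine image_le_of_deriv_right_lt_deriv_boundary'
      (f' := fun s => (bLV τ₁ τ₂ a b c d (x s)).1 + (bLV τ₁ τ₂ a b c d (x s)).2)
      (B := fun s => C / s) (B' := fun s => C * (-(s ^ 2)⁻¹))
      (hcont.mono (Icc_subset_Icc hε0.le (ht₀.2))) ?_ hinit ?_ ?_ ?_
    · intro s hs
      have hsIcc : s ∈ Icc (0:ℝ) T := ⟨hε0.le.trans hs.1, (hs.2.le.trans ht₀.2)⟩
      exact (hderiv' s hsIcc).mono_of_mem_nhdsWithin
        (Icc_mem_nhdsGE_of_mem ⟨hsIcc.1, lt_of_lt_of_le hs.2 ht₀.2⟩)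
    · intro s hs
      exact ContinuousWithinAt.div continuousWithinAt_const continuousWithinAt_id
        ((hε0.trans_le hs.1).ne')
    · intro s hs
      have hs0 : s ≠ 0 := (hε0.trans_le hs.1).ne'
      have : HasDerivAt (fun y : ℝ => C * y⁻¹) (C * (-(s ^ 2)⁻¹)) s :=
        (hasDerivAt_inv hs0).const_mul C
      simpa [div_eq_mul_inv] using this.hasDerivWithinAt
    · intro s hs hfs
      have hs0 : 0 < s := hε0.trans_le hs.1
      have hsT : s ≤ T := hs.2.le.trans ht₀.2
      have hsIcc : s ∈ Icc (0:ℝ) T := ⟨hs0.le, hsT⟩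
      obtain ⟨hp, hq⟩ := hpos s hsIcc
      set p := (x s).1
      set q := (x s).2
      have hS : s * (p + q) = C := by
        have : p + q = C / s := hfs
        rw [this, mul_div_assoc', mul_comm, mul_div_assoc, div_self hs0.ne', mul_one]
      have hτ1 : τ₁ ≤ τ := le_max_left _ _
      have hτ2 : τ₂ ≤ τ := le_max_right _ _
      have hττp : τ ≤ τp := le_max_left _ _
      have hma : m ≤ a := min_le_left _ _
      have hmb : m ≤ b := min_le_right _ _
      show p * (τ₁ - a * p - c * q) + q * (τ₂ - b * q - d * p) < C * (-(s ^ 2)⁻¹)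
      have hrw : C * (-(s ^ 2)⁻¹) = -C / s ^ 2 := by
        field_simp
      rw [hrw, lt_div_iff₀ (by positivity : (0:ℝ) < s ^ 2)]
      have hA : p * (τ₁ - a * p - c * q) + q * (τ₂ - b * q - d * p)
          ≤ τ * (p + q) - m / 2 * (p + q) ^ 2 := by
        nlinarith [mul_nonneg hm0.le (sq_nonneg (p - q)),
          mul_nonneg (sub_nonneg.2 hma) (sq_nonneg p),
          mul_nonneg (sub_nonneg.2 hmb) (sq_nonneg q),
          mul_nonneg (mul_nonneg hc hp) hq, mul_nonneg (mul_nonneg hd hp) hq,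
          mul_nonneg (sub_nonneg.2 hτ1) hp, mul_nonneg (sub_nonneg.2 hτ2) hq]
      have hA2 : (p * (τ₁ - a * p - c * q) + q * (τ₂ - b * q - d * p)) * s ^ 2
          ≤ (τ * (p + q) - m / 2 * (p + q) ^ 2) * s ^ 2 :=
        mul_le_mul_of_nonneg_right hA (sq_nonneg s)
      have hA3 : (τ * (p + q) - m / 2 * (p + q) ^ 2) * s ^ 2
          = τ * s * C - m / 2 * C ^ 2 := by
        linear_combination (τ * s - m / 2 * (s * (p + q) + C)) * hS
      have hτs : τ * s ≤ τp * T := by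
        nlinarith [mul_nonneg hτp0 (sub_nonneg.2 hsT),
          mul_nonneg (sub_nonneg.2 hττp) hs0.le]
      have hτsC : τ * s * C ≤ τp * T * C := mul_le_mul_of_nonneg_right hτs hC0.le
      have hmC2 : m * C ^ 2 = 2 * (2 + τp * T) * C := by
        rw [sq, ← mul_assoc, hmC]
      linarith
  exact key ⟨hεt₀, le_refl t₀⟩
end

section
/- Assume a, b, c, d > 0 with a > d and b > c. Then for every x₀ ∈ (0,∞)² and every ε > 0: liminf_{r→∞} inf{ t ≥ 0 : x^r(t) ∉ (ε,∞)² } > 0; that is, the exit time of the flow started from r·x₀ from the domain 𝒟_ε = (ε,∞)² stays bounded away from 0 as r → ∞. -/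
open Real Set Filter ENNReal Topology

/-- Exit time of `t ↦ X r t` from the domain `𝒟_ε = (ε,∞)²`
(with values in `ℝ≥0∞`, `inf ∅ = ∞`). -/
noncomputable def exitT (X : ℝ → ℝ → ℝ × ℝ) (ε r : ℝ) : ℝ≥0∞ :=
  sInf (ENNReal.ofReal '' {t : ℝ | 0 ≤ t ∧ ¬(ε < (X r t).1 ∧ ε < (X r t).2)})

noncomputable def bar (k m s₀ t : ℝ) : ℝ := k * Real.exp (m * t) / (t + s₀)

lemma bar_hasDerivAt (k m s₀ t : ℝ) (h : t + s₀ ≠ 0) :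
    HasDerivAt (bar k m s₀) (bar k m s₀ t * (m - (t + s₀)⁻¹)) t := by
  have h1 : HasDerivAt (fun t : ℝ => m * t) m t := by
    simpa using (hasDerivAt_id t).const_mul m
  have h2 : HasDerivAt (fun t : ℝ => Real.exp (m * t)) (Real.exp (m * t) * m) t := h1.exp
  have h3 : HasDerivAt (fun t : ℝ => t + s₀) 1 t := (hasDerivAt_id t).add_const s₀
  have h4 := (h2.div h3 h).const_mul k
  have he : bar k m s₀ t * (m - (t + s₀)⁻¹)
      = k * ((Real.exp (m * t) * m * (t + s₀) - Real.exp (m * t) * 1) / (t + s₀) ^ 2) := by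
    simp only [bar]; field_simp
  rw [he]
  exact h4.congr_deriv rfl |>.congr_of_eventuallyEq (by filter_upwards with s; simp [bar, mul_div_assoc])

lemma crossAux (u v : ℝ → ℝ) (T du dv : ℝ) (hT : 0 < T)
    (hbefore : ∀ s, 0 ≤ s → s < T → u s < v s) (heq : v T = u T)
    (hu : HasDerivAt u du T) (hv : HasDerivAt v dv T) (hlt : du < dv) : False := by
  have hw : HasDerivAt (fun s => v s - u s) (dv - du) T := hv.sub hu
  rw [hasDerivAt_iff_tendsto_slope] at hw
  have hmono : 𝓝[<] T ≤ 𝓝[≠] T := nhdsWithin_mono T fun s hs => ne_of_lt hs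
  have h1 : ∀ᶠ s in 𝓝[<] T, 0 < slope (fun s => v s - u s) T s :=
    (hw.mono_left hmono).eventually (eventually_gt_nhds (by linarith))
  have h2 : ∀ᶠ s in 𝓝[<] T, s ∈ Ioo 0 T :=
    eventually_of_mem (Ioo_mem_nhdsLT_of_mem ⟨hT, le_refl T⟩) fun s hs => hs
  obtain ⟨s, hs1, hs2⟩ := (h1.and h2).exists
  have hws : 0 < v s - u s := sub_pos.mpr (hbefore s hs2.1.le hs2.2)
  have hneg : slope (fun s => v s - u s) T s < 0 := by
    rw [slope_def_field]
    apply div_neg_of_pos_of_neg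
    · rw [heq]; linarith
    · linarith [hs2.2]
  linarith

lemma leAtOfLtBefore (u v : ℝ → ℝ) (T : ℝ) (hT : 0 < T)
    (hu : ContinuousAt u T) (hv : ContinuousAt v T)
    (h : ∀ s, 0 ≤ s → s < T → u s < v s) : u T ≤ v T := by
  refine le_of_tendsto_of_tendsto (b := 𝓝[<] T) (hu.tendsto.mono_left nhdsWithin_le_nhds)
    (hv.tendsto.mono_left nhdsWithin_le_nhds) ?_
  filter_upwards [Ioo_mem_nhdsLT_of_mem (⟨hT, le_refl T⟩ : T ∈ Ioc 0 T)] with s hs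
  exact (h s hs.1.le hs.2).le

lemma touch_lower (τ aa cc M κ Bo e₀ s₀ T : ℝ) (z w : ℝ → ℝ)
    (hTpos : 0 < T) (hs₀ : 0 < s₀)
    (hκ : 0 < κ) (haa : 0 < aa) (hcc : 0 ≤ cc) (hBo : 0 ≤ Bo)
    (hτ : -M < τ)
    (hsum : aa * κ + cc * Bo * e₀ < 1)
    (hexp1 : Real.exp (-M * T) ≤ 1) (hexp2 : Real.exp (M * T) ≤ e₀)
    (hbefore : ∀ s, 0 ≤ s → s < T → bar κ (-M) s₀ s < z s)
    (heq : z T = bar κ (-M) s₀ T)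
    (hz : HasDerivAt z (z T * (τ - aa * z T - cc * w T)) T)
    (hw : w T ≤ bar Bo M s₀ T) (hwpos : 0 ≤ w T) : False := by
  have hden : (0:ℝ) < T + s₀ := by linarith
  have hbarpos : 0 < bar κ (-M) s₀ T := by
    have : 0 < Real.exp (-M * T) := Real.exp_pos _
    simp only [bar]; positivity
  refine crossAux (bar κ (-M) s₀) z T _ _ hTpos hbefore heq
    (bar_hasDerivAt κ (-M) s₀ T hden.ne') hz ?_
  rw [heq]
  apply mul_lt_mul_of_pos_left ?_ hbarpos
  have hb1 : bar κ (-M) s₀ T ≤ κ / (T + s₀) := by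
    simp only [bar]
    gcongr
    nlinarith [mul_le_mul_of_nonneg_left hexp1 hκ.le]
  have hb2 : bar Bo M s₀ T ≤ Bo * e₀ / (T + s₀) := by
    simp only [bar]
    gcongr
  have hsum2 : aa * bar κ (-M) s₀ T + cc * w T < (T + s₀)⁻¹ := by
    have e1 : aa * bar κ (-M) s₀ T ≤ aa * (κ / (T + s₀)) :=
      mul_le_mul_of_nonneg_left hb1 haa.le
    have e2 : cc * w T ≤ cc * (Bo * e₀ / (T + s₀)) :=
      mul_le_mul_of_nonneg_left (hw.trans hb2) hcc
    have e3 : aa * (κ / (T + s₀)) + cc * (Bo * e₀ / (T + s₀)) < (T + s₀)⁻¹ := by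
      rw [show aa * (κ / (T + s₀)) + cc * (Bo * e₀ / (T + s₀))
          = (aa * κ + cc * Bo * e₀) / (T + s₀) by ring, inv_eq_one_div]
      exact (div_lt_div_iff_of_pos_right hden).mpr hsum
    linarith
  linarith

lemma touch_upper (τ aa cc M Ao s₀ T : ℝ) (z w : ℝ → ℝ)
    (hTpos : 0 < T) (hs₀ : 0 < s₀) (hAo : 0 < Ao)
    (haaAo : aa * Ao = 1) (hcc : 0 ≤ cc)
    (hτ : τ < M) (hexp1 : 1 ≤ Real.exp (M * T))
    (hbefore : ∀ s, 0 ≤ s → s < T → z s < bar Ao M s₀ s)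
    (heq : bar Ao M s₀ T = z T)
    (hz : HasDerivAt z (z T * (τ - aa * z T - cc * w T)) T)
    (hwpos : 0 ≤ w T) : False := by
  have hden : (0:ℝ) < T + s₀ := by linarith
  have hbarpos : 0 < bar Ao M s₀ T := by
    have : 0 < Real.exp (M * T) := Real.exp_pos _
    simp only [bar]; positivity
  refine crossAux z (bar Ao M s₀) T _ _ hTpos hbefore heq hz
    (bar_hasDerivAt Ao M s₀ T hden.ne') ?_
  have hzpos : 0 < z T := heq ▸ hbarpos
  rw [show z T = bar Ao M s₀ T from heq.symm]
  apply mul_lt_mul_of_pos_left ?_ hbarpos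
  have h1 : (T + s₀)⁻¹ ≤ aa * bar Ao M s₀ T := by
    simp only [bar]
    rw [show aa * (Ao * Real.exp (M * T) / (T + s₀))
        = (aa * Ao) * Real.exp (M * T) / (T + s₀) by ring, haaAo, one_mul, inv_eq_one_div]
    gcongr
  nlinarith [mul_nonneg hcc hwpos]

set_option maxHeartbeats 4000000 in
/-- When `a > d` and `b > c`, the exit time of the flow started from `r·x₀`
from `𝒟_ε = (ε,∞)²` stays bounded away from `0` as `r → ∞`. -/
theorem stmt8 (τ₁ τ₂ a b c d : ℝ) (ha : 0 < a) (hb : 0 < b) (hc : 0 < c) (hd : 0 < d)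
    (had : d < a) (hbc : c < b)
    (x₀ : ℝ × ℝ) (hx₀ : 0 < x₀.1 ∧ 0 < x₀.2)
    (X : ℝ → ℝ → ℝ × ℝ)
    (hX0 : ∀ r : ℝ, 0 < r → X r 0 = (r * x₀.1, r * x₀.2))
    (hXmem : ∀ r : ℝ, 0 < r → ∀ t : ℝ, 0 ≤ t → 0 ≤ (X r t).1 ∧ 0 ≤ (X r t).2)
    (hXder : ∀ r : ℝ, 0 < r → ∀ t : ℝ, 0 ≤ t →
      HasDerivAt (X r) (bLV τ₁ τ₂ a b c d (X r t)) t)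
    (ε : ℝ) (hε : 0 < ε) :
    0 < Filter.liminf (fun r => exitT X ε r) Filter.atTop := by
  obtain ⟨hx1, hx2⟩ := hx₀
  set M : ℝ := 1 + |τ₁| + |τ₂| with hM
  have hMpos : 0 < M := by positivity
  have hτ₁M : τ₁ < M := by
    have := le_abs_self τ₁; have := abs_nonneg τ₂; rw [hM]; linarith
  have hτ₁M' : -M < τ₁ := by
    have := neg_abs_le τ₁; have := abs_nonneg τ₂; rw [hM]; linarith
  have hτ₂M : τ₂ < M := by
    have := le_abs_self τ₂; have := abs_nonneg τ₁; rw [hM]; linarith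
  have hτ₂M' : -M < τ₂ := by
    have := neg_abs_le τ₂; have := abs_nonneg τ₁; rw [hM]; linarith
  set E : ℝ := min (b / c) (a / d) with hE
  have hE1 : 1 < E := lt_min ((one_lt_div hc).mpr hbc) ((one_lt_div hd).mpr had)
  set e₀ : ℝ := (1 + E) / 2 with he₀def
  have he₀1 : 1 < e₀ := by rw [he₀def]; linarith
  have he₀E : e₀ < E := by rw [he₀def]; linarith
  set δ₀ : ℝ := Real.log e₀ / M with hδ₀def
  have hδ₀pos : 0 < δ₀ := div_pos (Real.log_pos he₀1) hMpos
  have hMδ₀ : M * δ₀ = Real.log e₀ := by rw [hδ₀def]; field_simp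
  have hexpδ₀ : Real.exp (M * δ₀) = e₀ := by rw [hMδ₀, Real.exp_log (by linarith)]
  have hcb : c * b⁻¹ * e₀ < 1 := by
    have h := lt_of_lt_of_le he₀E (min_le_left _ _)
    rw [lt_div_iff₀ hc] at h
    rw [show c * b⁻¹ * e₀ = e₀ * c / b by rw [div_eq_mul_inv]; ring]
    exact (div_lt_one hb).mpr h
  have hda : d * a⁻¹ * e₀ < 1 := by
    have h := lt_of_lt_of_le he₀E (min_le_right _ _)
    rw [lt_div_iff₀ hd] at h
    rw [show d * a⁻¹ * e₀ = e₀ * d / a by rw [div_eq_mul_inv]; ring]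
    exact (div_lt_one ha).mpr h
  set sstar : ℝ := min (a⁻¹ / x₀.1) (b⁻¹ / x₀.2) / 2 with hsstardef
  have hsstarpos : 0 < sstar := by
    have h1 : 0 < min (a⁻¹ / x₀.1) (b⁻¹ / x₀.2) := lt_min (by positivity) (by positivity)
    rw [hsstardef]; linarith
  set κ : ℝ := min (min ((1 - c * b⁻¹ * e₀) / (2 * a)) ((1 - d * a⁻¹ * e₀) / (2 * b)))
      (min (sstar * x₀.1 / 2) (sstar * x₀.2 / 2)) with hκdef
  have hκpos : 0 < κ := by
    rw [hκdef]
    apply lt_min (lt_min (div_pos (by linarith) (by positivity)) (div_pos (by linarith) (by positivity)))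
      (lt_min (by positivity) (by positivity))
  have hκ1 : a * κ + c * b⁻¹ * e₀ < 1 := by
    have h1 : κ ≤ (1 - c * b⁻¹ * e₀) / (2 * a) := le_trans (min_le_left _ _) (min_le_left _ _)
    rw [le_div_iff₀ (by positivity)] at h1
    have h2 : κ * (2 * a) = 2 * (a * κ) := by ring
    have h3 : 0 < a * κ := by positivity
    linarith only [h1, h2, h3]
  have hκ2 : b * κ + d * a⁻¹ * e₀ < 1 := by
    have h1 : κ ≤ (1 - d * a⁻¹ * e₀) / (2 * b) := le_trans (min_le_left _ _) (min_le_right _ _)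
    rw [le_div_iff₀ (by positivity)] at h1
    have h2 : κ * (2 * b) = 2 * (b * κ) := by ring
    have h3 : 0 < b * κ := by positivity
    linarith only [h1, h2, h3]
  have hκx : κ < sstar * x₀.1 := by
    have h1 : κ ≤ sstar * x₀.1 / 2 := le_trans (min_le_right _ _) (min_le_left _ _)
    linarith only [h1, mul_pos hsstarpos hx1]
  have hκy : κ < sstar * x₀.2 := by
    have h1 : κ ≤ sstar * x₀.2 / 2 := le_trans (min_le_right _ _) (min_le_right _ _)
    linarith only [h1, mul_pos hsstarpos hx2]
  have hsA : sstar * x₀.1 < a⁻¹ := by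
    have h1 : sstar ≤ a⁻¹ / x₀.1 / 2 := by
      have := min_le_left (a⁻¹ / x₀.1) (b⁻¹ / x₀.2); rw [hsstardef]; linarith
    have h2 : a⁻¹ / x₀.1 * x₀.1 = a⁻¹ := div_mul_cancel₀ _ hx1.ne'
    have h3 : a⁻¹ / x₀.1 / 2 * x₀.1 = a⁻¹ / x₀.1 * x₀.1 / 2 := by ring
    linarith only [mul_le_mul_of_nonneg_right h1 hx1.le, h2, h3, inv_pos.mpr ha]
  have hsB : sstar * x₀.2 < b⁻¹ := by
    have h1 : sstar ≤ b⁻¹ / x₀.2 / 2 := by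
      have := min_le_right (a⁻¹ / x₀.1) (b⁻¹ / x₀.2); rw [hsstardef]; linarith
    have h2 : b⁻¹ / x₀.2 * x₀.2 = b⁻¹ := div_mul_cancel₀ _ hx2.ne'
    have h3 : b⁻¹ / x₀.2 / 2 * x₀.2 = b⁻¹ / x₀.2 * x₀.2 / 2 := by ring
    linarith only [mul_le_mul_of_nonneg_right h1 hx2.le, h2, h3, inv_pos.mpr hb]
  set δ : ℝ := min δ₀ (κ * Real.exp (-(M * δ₀)) / (2 * ε + 2)) with hδdef
  have hδpos : 0 < δ := lt_min hδ₀pos (by positivity)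
  have hδδ₀ : δ ≤ δ₀ := min_le_left _ _
  have hδε : 2 * δ * ε < κ * Real.exp (-(M * δ₀)) := by
    have h1 : δ ≤ κ * Real.exp (-(M * δ₀)) / (2 * ε + 2) := min_le_right _ _
    have h2 : 0 < κ * Real.exp (-(M * δ₀)) := by positivity
    rw [le_div_iff₀ (by linarith)] at h1
    have h3 : δ * (2 * ε + 2) = 2 * δ * ε + 2 * δ := by ring
    linarith only [h1, h3, hδpos]
  have main : ∀ r, max (sstar / δ) 1 ≤ r → ENNReal.ofReal δ ≤ exitT X ε r := by
    intro r hrR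
    have hr1 : (1:ℝ) ≤ r := le_trans (le_max_right _ _) hrR
    have hrpos : 0 < r := by linarith
    set s₀ : ℝ := sstar / r with hs₀def
    have hs₀pos : 0 < s₀ := div_pos hsstarpos hrpos
    have hs₀δ : s₀ ≤ δ := by
      have h1 : sstar / δ ≤ r := le_trans (le_max_left _ _) hrR
      rw [div_le_iff₀ hδpos] at h1
      rw [hs₀def, div_le_iff₀ hrpos]
      have h2 : r * δ = δ * r := by ring
      linarith only [h1, h2]
    have hdx : ∀ t, 0 ≤ t → HasDerivAt (fun u => (X r u).1)
        ((X r t).1 * (τ₁ - a * (X r t).1 - c * (X r t).2)) t := by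
      intro t ht
      have h := ((hXder r hrpos t ht).hasFDerivAt.fst).hasDerivAt
      simpa [bLV] using h
    have hdy : ∀ t, 0 ≤ t → HasDerivAt (fun u => (X r u).2)
        ((X r t).2 * (τ₂ - b * (X r t).2 - d * (X r t).1)) t := by
      intro t ht
      have h := ((hXder r hrpos t ht).hasFDerivAt.snd).hasDerivAt
      simpa [bLV] using h
    have hcx : ∀ t, 0 ≤ t → ContinuousAt (fun u => (X r u).1) t :=
      fun t ht => ((hXder r hrpos t ht).continuousAt).fst
    have hcy : ∀ t, 0 ≤ t → ContinuousAt (fun u => (X r u).2) t :=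
      fun t ht => ((hXder r hrpos t ht).continuousAt).snd
    have hcbar : ∀ (k m : ℝ) t, 0 ≤ t → ContinuousAt (bar k m s₀) t := by
      intro k m t ht
      exact (bar_hasDerivAt k m s₀ t (ne_of_gt (by linarith only [ht, hs₀pos]))).continuousAt
    -- initial strict inequalities
    have hP0 : bar κ (-M) s₀ 0 < (X r 0).1 ∧ (X r 0).1 < bar a⁻¹ M s₀ 0 ∧
        bar κ (-M) s₀ 0 < (X r 0).2 ∧ (X r 0).2 < bar b⁻¹ M s₀ 0 := by
      have hbar0 : ∀ k : ℝ, bar k (-M) s₀ 0 = k / s₀ := by intro k; simp [bar]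
      have hbar0' : ∀ k : ℝ, bar k M s₀ 0 = k / s₀ := by intro k; simp [bar]
      have hx0 : (X r 0).1 = r * x₀.1 := by rw [hX0 r hrpos]
      have hy0 : (X r 0).2 = r * x₀.2 := by rw [hX0 r hrpos]
      have hprod : ∀ q : ℝ, r * q * s₀ = q * sstar := by
        intro q; rw [hs₀def]; field_simp
      refine ⟨?_, ?_, ?_, ?_⟩
      · rw [hbar0, hx0, div_lt_iff₀ hs₀pos, hprod]; linarith only [hκx, mul_comm sstar x₀.1]
      · rw [hbar0', hx0, lt_div_iff₀ hs₀pos, hprod]; linarith only [hsA, mul_comm sstar x₀.1]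
      · rw [hbar0, hy0, div_lt_iff₀ hs₀pos, hprod]; linarith only [hκy, mul_comm sstar x₀.2]
      · rw [hbar0', hy0, lt_div_iff₀ hs₀pos, hprod]; linarith only [hsB, mul_comm sstar x₀.2]
    -- invariance of the barrier region on [0, δ]
    have inv : ∀ t, 0 ≤ t → t ≤ δ →
        bar κ (-M) s₀ t < (X r t).1 ∧ (X r t).1 < bar a⁻¹ M s₀ t ∧
        bar κ (-M) s₀ t < (X r t).2 ∧ (X r t).2 < bar b⁻¹ M s₀ t := by
      set S : Set ℝ := {t : ℝ | (0 ≤ t ∧ t ≤ δ) ∧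
        ¬(bar κ (-M) s₀ t < (X r t).1 ∧ (X r t).1 < bar a⁻¹ M s₀ t ∧
          bar κ (-M) s₀ t < (X r t).2 ∧ (X r t).2 < bar b⁻¹ M s₀ t)} with hSdef
      have hSempty : S = ∅ := by
        by_contra hSne'
        have hSne : S.Nonempty := Set.nonempty_iff_ne_empty.mpr hSne'
        have hSbdd : BddBelow S := ⟨0, fun s hs => hs.1.1⟩
        set T : ℝ := sInf S with hTdef
        have hT0 : 0 ≤ T := le_csInf hSne fun s hs => hs.1.1
        have hTδ : T ≤ δ := by
          obtain ⟨t₀, ht₀⟩ := hSne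
          exact le_trans (csInf_le hSbdd ht₀) ht₀.1.2
        have hbefore : ∀ s, 0 ≤ s → s < T →
            bar κ (-M) s₀ s < (X r s).1 ∧ (X r s).1 < bar a⁻¹ M s₀ s ∧
            bar κ (-M) s₀ s < (X r s).2 ∧ (X r s).2 < bar b⁻¹ M s₀ s := by
          intro s h0 hsT
          by_contra h
          exact absurd (csInf_le hSbdd ⟨⟨h0, hsT.le.trans hTδ⟩, h⟩) (not_le.mpr hsT)
        have hTmem : T ∈ S := by
          by_contra hTS
          have hPT : bar κ (-M) s₀ T < (X r T).1 ∧ (X r T).1 < bar a⁻¹ M s₀ T ∧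
              bar κ (-M) s₀ T < (X r T).2 ∧ (X r T).2 < bar b⁻¹ M s₀ T := by
            by_contra h
            exact hTS ⟨⟨hT0, hTδ⟩, h⟩
          have hev : ∀ᶠ s in 𝓝 T, bar κ (-M) s₀ s < (X r s).1 ∧
              (X r s).1 < bar a⁻¹ M s₀ s ∧ bar κ (-M) s₀ s < (X r s).2 ∧
              (X r s).2 < bar b⁻¹ M s₀ s := by
            have e1 := (hcbar κ (-M) T hT0).eventually_lt (hcx T hT0) hPT.1
            have e2 := (hcx T hT0).eventually_lt (hcbar a⁻¹ M T hT0) hPT.2.1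
            have e3 := (hcbar κ (-M) T hT0).eventually_lt (hcy T hT0) hPT.2.2.1
            have e4 := (hcy T hT0).eventually_lt (hcbar b⁻¹ M T hT0) hPT.2.2.2
            filter_upwards [e1, e2, e3, e4] with s q1 q2 q3 q4
            exact ⟨q1, q2, q3, q4⟩
          rw [Metric.eventually_nhds_iff] at hev
          obtain ⟨η, hηpos, hball⟩ := hev
          obtain ⟨s, hsS, hsT⟩ := exists_lt_of_csInf_lt hSne (show sInf S < T + η by
            rw [← hTdef]; linarith)
          have hTs : T ≤ s := csInf_le hSbdd hsS
          have hdist : dist s T < η := by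
            rw [Real.dist_eq, abs_of_nonneg (by linarith)]; linarith
          exact hsS.2 (hball hdist)
        have hTpos : 0 < T := by
          rcases eq_or_lt_of_le hT0 with h | h
          · exact absurd (h ▸ hP0) hTmem.2
          · exact h
        have hden : (0:ℝ) < T + s₀ := by linarith only [hT0, hs₀pos]
        have hxlo : bar κ (-M) s₀ T ≤ (X r T).1 :=
          leAtOfLtBefore _ _ T hTpos (hcbar κ (-M) T hT0) (hcx T hT0)
            (fun s h0 hsT => (hbefore s h0 hsT).1)
        have hxup : (X r T).1 ≤ bar a⁻¹ M s₀ T :=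
          leAtOfLtBefore _ _ T hTpos (hcx T hT0) (hcbar a⁻¹ M T hT0)
            (fun s h0 hsT => (hbefore s h0 hsT).2.1)
        have hylo : bar κ (-M) s₀ T ≤ (X r T).2 :=
          leAtOfLtBefore _ _ T hTpos (hcbar κ (-M) T hT0) (hcy T hT0)
            (fun s h0 hsT => (hbefore s h0 hsT).2.2.1)
        have hyup : (X r T).2 ≤ bar b⁻¹ M s₀ T :=
          leAtOfLtBefore _ _ T hTpos (hcy T hT0) (hcbar b⁻¹ M T hT0)
            (fun s h0 hsT => (hbefore s h0 hsT).2.2.2)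
        have hexpT : Real.exp (M * T) ≤ e₀ := by
          rw [← hexpδ₀]
          exact Real.exp_le_exp.mpr (mul_le_mul_of_nonneg_left (hTδ.trans hδδ₀) hMpos.le)
        have hexpT' : Real.exp (-M * T) ≤ 1 := by
          rw [← Real.exp_zero]
          exact Real.exp_le_exp.mpr (by
            have := mul_nonneg hMpos.le hT0
            linarith only [this])
        have hexp1T : 1 ≤ Real.exp (M * T) := by
          rw [← Real.exp_zero]
          exact Real.exp_le_exp.mpr (mul_nonneg hMpos.le hT0)
        have hcases : (X r T).1 ≤ bar κ (-M) s₀ T ∨ bar a⁻¹ M s₀ T ≤ (X r T).1 ∨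
            (X r T).2 ≤ bar κ (-M) s₀ T ∨ bar b⁻¹ M s₀ T ≤ (X r T).2 := by
          by_contra hno
          push_neg at hno
          exact hTmem.2 ⟨hno.1, hno.2.1, hno.2.2.1, hno.2.2.2⟩
        rcases hcases with h | h | h | h
        · exact touch_lower τ₁ a c M κ b⁻¹ e₀ s₀ T (fun u => (X r u).1) (fun u => (X r u).2)
            hTpos hs₀pos hκpos ha hc.le (by positivity) hτ₁M' hκ1 hexpT' hexpT
            (fun s h0 hsT => (hbefore s h0 hsT).1) (le_antisymm h hxlo) (hdx T hT0) hyup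
            (hXmem r hrpos T hT0).2
        · exact touch_upper τ₁ a c M a⁻¹ s₀ T (fun u => (X r u).1) (fun u => (X r u).2)
            hTpos hs₀pos (by positivity) (mul_inv_cancel₀ ha.ne') hc.le hτ₁M hexp1T
            (fun s h0 hsT => (hbefore s h0 hsT).2.1) (le_antisymm h hxup) (hdx T hT0)
            (hXmem r hrpos T hT0).2
        · exact touch_lower τ₂ b d M κ a⁻¹ e₀ s₀ T (fun u => (X r u).2) (fun u => (X r u).1)
            hTpos hs₀pos hκpos hb hd.le (by positivity) hτ₂M' hκ2 hexpT' hexpT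
            (fun s h0 hsT => (hbefore s h0 hsT).2.2.1) (le_antisymm h hylo) (hdy T hT0) hxup
            (hXmem r hrpos T hT0).1
        · exact touch_upper τ₂ b d M b⁻¹ s₀ T (fun u => (X r u).2) (fun u => (X r u).1)
            hTpos hs₀pos (by positivity) (mul_inv_cancel₀ hb.ne') hd.le hτ₂M hexp1T
            (fun s h0 hsT => (hbefore s h0 hsT).2.2.2) (le_antisymm h hyup) (hdy T hT0)
            (hXmem r hrpos T hT0).1
      intro t ht0 htδ
      by_contra hP
      have : t ∈ S := ⟨⟨ht0, htδ⟩, hP⟩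
      rw [hSempty] at this
      exact this
    -- conclude the exit-time bound
    rw [exitT]
    apply le_sInf
    rintro e ⟨t, ⟨ht0, hnot⟩, rfl⟩
    rcases le_or_gt t δ with hle | hgt
    · exfalso
      obtain ⟨h1, _, h3, _⟩ := inv t ht0 hle
      have hεlo : ε < bar κ (-M) s₀ t := by
        have hlow : κ * Real.exp (-(M * δ₀)) / (2 * δ) ≤ bar κ (-M) s₀ t := by
          simp only [bar]
          gcongr
          all_goals first
          | positivity
          | linarith only [ht0, hs₀pos]
          | linarith only [hle, hs₀δ]
          | (have h5 := mul_le_mul_of_nonneg_left (hle.trans hδδ₀) hMpos.le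
             linarith only [h5])
        have h6 : ε < κ * Real.exp (-(M * δ₀)) / (2 * δ) := by
          rw [lt_div_iff₀ (by linarith only [hδpos])]
          have h7 : ε * (2 * δ) = 2 * δ * ε := by ring
          linarith only [hδε, h7]
        linarith only [h6, hlow]
      exact hnot ⟨by linarith only [hεlo, h1], by linarith only [hεlo, h3]⟩
    · exact ENNReal.ofReal_le_ofReal hgt.le
  have hev : ∀ᶠ r in atTop, ENNReal.ofReal δ ≤ exitT X ε r :=
    eventually_atTop.mpr ⟨max (sstar / δ) 1, main⟩
  have hle : ENNReal.ofReal δ ≤ Filter.liminf (fun r => exitT X ε r) Filter.atTop :=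
    le_liminf_of_le (by isBoundedDefault) hev
  exact lt_of_lt_of_le (ENNReal.ofReal_pos.mpr hδpos) hle
end
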